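/- arXiv:0910.0608 — 12 statements merged into one kernel-verified Lean document; each statement's English description precedes it below -/
import Mathlib

section
/- Let V be a real normed space satisfying the Aronszajn criterion. If p and q are nonzero vectors with ‖p + q‖ = ‖p - q‖, then for all natural numbers a and b, ‖a • p + b • q‖ = ‖a • p - b • q‖. -/
theorem stmt_1 (V : Type*) [NormedAddCommGroup V] [NormedSpace ℝ V]
    (hA : ∀ v₁ w₁ v₂ w₂ : V, ‖v₁‖ = ‖v₂‖ → ‖w₁‖ = ‖w₂‖ → ‖v₁ - w₁‖ = ‖v₂ - w₂‖ → ‖v₁ + w₁‖ = ‖v₂ + w₂‖)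
    (p q : V) (hp : p ≠ 0) (hq : q ≠ 0) (hpq : ‖p + q‖ = ‖p - q‖) :
    ∀ a b : ℕ, ‖a • p + b • q‖ = ‖a • p - b • q‖ := by
  have key : ∀ (x y : V), ‖x + y‖ = ‖x - y‖ → ∀ n : ℕ, ‖x + n • y‖ = ‖x - n • y‖ := by
    intro x y hxy n
    induction n using Nat.twoStepInduction with
    | zero => simp
    | one => simpa using hxy
    | more n ih ih1 =>
      have hdiff : ‖(x + (n + 1) • y) - y‖ = ‖(x - (n + 1) • y) - (-y)‖ := by
        have e1 : (x + (n + 1) • y) - y = x + n • y := by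
          rw [succ_nsmul]; abel
        have e2 : (x - (n + 1) • y) - (-y) = x - n • y := by
          rw [succ_nsmul]; abel
        rw [e1, e2]; exact ih
      have := hA (x + (n + 1) • y) y (x - (n + 1) • y) (-y) ih1 (by simp) hdiff
      have e1 : (x + (n + 1) • y) + y = x + (n + 2) • y := by
        rw [succ_nsmul (n := n + 1)]; abel
      have e2 : (x - (n + 1) • y) + (-y) = x - (n + 2) • y := by
        rw [succ_nsmul (n := n + 1)]; abel
      rw [e1, e2] at this
      exact this
  intro a b
  have h1 : ‖q + p‖ = ‖q - p‖ := by
    rw [add_comm, norm_sub_rev]; exact hpq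
  have h2 : ‖q + a • p‖ = ‖q - a • p‖ := key q p h1 a
  have h3 : ‖(a : ℕ) • p + q‖ = ‖(a : ℕ) • p - q‖ := by
    rw [add_comm, norm_sub_rev]; exact h2
  exact key (a • p) q h3 b
end

section
/- Let V be a real normed space satisfying the Aronszajn criterion. If p and q are nonzero vectors with ‖p + q‖ = ‖p - q‖, then for all integers a and b, ‖a • p + b • q‖ = ‖a • p - b • q‖. -/
theorem stmt_2 (V : Type*) [NormedAddCommGroup V] [NormedSpace ℝ V]
    (hA : ∀ v₁ w₁ v₂ w₂ : V, ‖v₁‖ = ‖v₂‖ → ‖w₁‖ = ‖w₂‖ → ‖v₁ - w₁‖ = ‖v₂ - w₂‖ → ‖v₁ + w₁‖ = ‖v₂ + w₂‖)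
    (p q : V) (hp : p ≠ 0) (hq : q ≠ 0) (hpq : ‖p + q‖ = ‖p - q‖) :
    ∀ a b : ℤ, ‖a • p + b • q‖ = ‖a • p - b • q‖ := by
  -- Step 1: ‖p + n•q‖ = ‖p - n•q‖ for naturals n
  have h1 : ∀ n : ℕ, ‖p + (n : ℤ) • q‖ = ‖p - (n : ℤ) • q‖ ∧
      ‖p + ((n : ℤ) + 1) • q‖ = ‖p - ((n : ℤ) + 1) • q‖ := by
    intro n
    induction n with
    | zero => constructor <;> simp [hpq]
    | succ n ih =>
      refine ⟨by push_cast; exact ih.2, ?_⟩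
      have := hA (p + ((n : ℤ) + 1) • q) q (p - ((n : ℤ) + 1) • q) (-q)
        ih.2 (norm_neg q).symm (by
          have e1 : p + ((n : ℤ) + 1) • q - q = p + (n : ℤ) • q := by
            push_cast; module
          have e2 : p - ((n : ℤ) + 1) • q - -q = p - (n : ℤ) • q := by
            push_cast; module
          rw [e1, e2]; exact ih.1)
      have e1 : p + ((n : ℤ) + 1) • q + q = p + ((n : ℤ) + 1 + 1) • q := by
        push_cast; module
      have e2 : p - ((n : ℤ) + 1) • q + -q = p - ((n : ℤ) + 1 + 1) • q := by
        push_cast; module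
      rw [e1, e2] at this
      push_cast
      convert this using 3 <;> push_cast <;> ring
  -- Step 2: ‖m•p + n•q‖ = ‖m•p - n•q‖ for naturals m, n
  have h2 : ∀ m : ℕ, (∀ n : ℕ, ‖(m : ℤ) • p + (n : ℤ) • q‖ = ‖(m : ℤ) • p - (n : ℤ) • q‖) ∧
      (∀ n : ℕ, ‖((m : ℤ) + 1) • p + (n : ℤ) • q‖ = ‖((m : ℤ) + 1) • p - (n : ℤ) • q‖) := by
    intro m
    induction m with
    | zero =>
      refine ⟨fun n => by simp, fun n => ?_⟩
      have := (h1 n).1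
      simpa using this
    | succ m ih =>
      refine ⟨fun n => by push_cast; exact ih.2 n, fun n => ?_⟩
      have := hA (((m : ℤ) + 1) • p + (n : ℤ) • q) p (((m : ℤ) + 1) • p - (n : ℤ) • q) p
        (ih.2 n) rfl (by
          have e1 : ((m : ℤ) + 1) • p + (n : ℤ) • q - p = (m : ℤ) • p + (n : ℤ) • q := by
            module
          have e2 : ((m : ℤ) + 1) • p - (n : ℤ) • q - p = (m : ℤ) • p - (n : ℤ) • q := by
            module
          rw [e1, e2]; exact ih.1 n)
      have e1 : ((m : ℤ) + 1) • p + (n : ℤ) • q + p = ((m : ℤ) + 1 + 1) • p + (n : ℤ) • q := by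
        module
      have e2 : ((m : ℤ) + 1) • p - (n : ℤ) • q + p = ((m : ℤ) + 1 + 1) • p - (n : ℤ) • q := by
        module
      rw [e1, e2] at this
      push_cast
      convert this using 3 <;> push_cast <;> ring
  have key : ∀ a b : ℤ, 0 ≤ a → 0 ≤ b → ‖a • p + b • q‖ = ‖a • p - b • q‖ := by
    intro a b ha hb
    obtain ⟨m, rfl⟩ := Int.eq_ofNat_of_zero_le ha
    obtain ⟨n, rfl⟩ := Int.eq_ofNat_of_zero_le hb
    exact (h2 m).1 n
  -- reduce to nonnegative a via ‖-x‖ = ‖x‖, and to nonnegative b by symmetry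
  have keyb : ∀ a b : ℤ, 0 ≤ a → ‖a • p + b • q‖ = ‖a • p - b • q‖ := by
    intro a b ha
    rcases le_or_gt 0 b with hb | hb
    · exact key a b ha hb
    · have := key a (-b) ha (by omega)
      rw [show a • p + -b • q = a • p - b • q by module,
          show a • p - -b • q = a • p + b • q by module] at this
      exact this.symm
  intro a b
  rcases le_or_gt 0 a with ha | ha
  · exact keyb a b ha
  · have := keyb (-a) (-b) (by omega)
    rw [show (-a) • p + (-b) • q = -(a • p + b • q) by module,
        show (-a) • p - (-b) • q = -(a • p - b • q) by module, norm_neg, norm_neg] at this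
    exact this
end

section
/- Let V be a real normed space satisfying the Aronszajn criterion. If p and q are nonzero vectors with ‖p + q‖ = ‖p - q‖, then for all rational numbers a and b, ‖a • p + b • q‖ = ‖a • p - b • q‖. -/
private lemma ortho_nsmul (V : Type*) [NormedAddCommGroup V] [NormedSpace ℝ V]
    (hA : ∀ v₁ w₁ v₂ w₂ : V, ‖v₁‖ = ‖v₂‖ → ‖w₁‖ = ‖w₂‖ → ‖v₁ - w₁‖ = ‖v₂ - w₂‖ → ‖v₁ + w₁‖ = ‖v₂ + w₂‖)
    (x y : V) (h : ‖x + y‖ = ‖x - y‖) :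
    ∀ n : ℕ, ‖x + (n : ℝ) • y‖ = ‖x - (n : ℝ) • y‖ := by
  have key : ∀ n : ℕ, (‖x + (n : ℝ) • y‖ = ‖x - (n : ℝ) • y‖) ∧
      (‖x + ((n : ℝ) + 1) • y‖ = ‖x - ((n : ℝ) + 1) • y‖) := by
    intro n
    induction n with
    | zero => constructor <;> simp [h]
    | succ n ih =>
      refine ⟨by push_cast; exact ih.2, ?_⟩
      push_cast
      have step := hA (x + ((n : ℝ) + 1) • y) y (x - ((n : ℝ) + 1) • y) (-y)
        ih.2 (by simp) ?_
      · calc ‖x + ((n : ℝ) + 1 + 1) • y‖ = ‖x + ((n : ℝ) + 1) • y + y‖ := by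
              congr 1; module
          _ = ‖x - ((n : ℝ) + 1) • y + -y‖ := step
          _ = ‖x - ((n : ℝ) + 1 + 1) • y‖ := by congr 1; module
      · calc ‖x + ((n : ℝ) + 1) • y - y‖ = ‖x + (n : ℝ) • y‖ := by congr 1; module
          _ = ‖x - (n : ℝ) • y‖ := ih.1
          _ = ‖x - ((n : ℝ) + 1) • y - -y‖ := by congr 1; module
  intro n
  exact (key n).1

private lemma ortho_zsmul (V : Type*) [NormedAddCommGroup V] [NormedSpace ℝ V]
    (hA : ∀ v₁ w₁ v₂ w₂ : V, ‖v₁‖ = ‖v₂‖ → ‖w₁‖ = ‖w₂‖ → ‖v₁ - w₁‖ = ‖v₂ - w₂‖ → ‖v₁ + w₁‖ = ‖v₂ + w₂‖)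
    (x y : V) (h : ‖x + y‖ = ‖x - y‖) :
    ∀ m : ℤ, ‖x + (m : ℝ) • y‖ = ‖x - (m : ℝ) • y‖ := by
  intro m
  rcases m.natAbs_eq with h' | h'
  · rw [h', Int.cast_natCast]
    exact ortho_nsmul V hA x y h m.natAbs
  · rw [h', Int.cast_neg, Int.cast_natCast]
    have := ortho_nsmul V hA x y h m.natAbs
    calc ‖x + -(m.natAbs : ℝ) • y‖ = ‖x - (m.natAbs : ℝ) • y‖ := by congr 1; module
      _ = ‖x + (m.natAbs : ℝ) • y‖ := this.symm
      _ = ‖x - -(m.natAbs : ℝ) • y‖ := by congr 1; module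

private lemma ortho_zsmul_zsmul (V : Type*) [NormedAddCommGroup V] [NormedSpace ℝ V]
    (hA : ∀ v₁ w₁ v₂ w₂ : V, ‖v₁‖ = ‖v₂‖ → ‖w₁‖ = ‖w₂‖ → ‖v₁ - w₁‖ = ‖v₂ - w₂‖ → ‖v₁ + w₁‖ = ‖v₂ + w₂‖)
    (x y : V) (h : ‖x + y‖ = ‖x - y‖) (m n : ℤ) :
    ‖(m : ℝ) • x + (n : ℝ) • y‖ = ‖(m : ℝ) • x - (n : ℝ) • y‖ := by
  have h1 : ‖x + (n : ℝ) • y‖ = ‖x - (n : ℝ) • y‖ := ortho_zsmul V hA x y h n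
  have h2 : ‖(n : ℝ) • y + x‖ = ‖(n : ℝ) • y - x‖ := by
    rw [add_comm, norm_sub_rev]; exact h1
  have h3 := ortho_zsmul V hA ((n : ℝ) • y) x h2 m
  rw [add_comm, norm_sub_rev]
  calc ‖(n : ℝ) • y + (m : ℝ) • x‖ = ‖(n : ℝ) • y - (m : ℝ) • x‖ := h3
    _ = ‖(n : ℝ) • y - (m : ℝ) • x‖ := rfl

theorem stmt_3 (V : Type*) [NormedAddCommGroup V] [NormedSpace ℝ V]
    (hA : ∀ v₁ w₁ v₂ w₂ : V, ‖v₁‖ = ‖v₂‖ → ‖w₁‖ = ‖w₂‖ → ‖v₁ - w₁‖ = ‖v₂ - w₂‖ → ‖v₁ + w₁‖ = ‖v₂ + w₂‖)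
    (p q : V) (hp : p ≠ 0) (hq : q ≠ 0) (hpq : ‖p + q‖ = ‖p - q‖) :
    ∀ a b : ℚ, ‖(a : ℝ) • p + (b : ℝ) • q‖ = ‖(a : ℝ) • p - (b : ℝ) • q‖ := by
  intro a b
  set d : ℝ := (a.den : ℝ) * (b.den : ℝ) with hd
  have hd0 : (0 : ℝ) < d := by
    apply mul_pos <;> exact_mod_cast Nat.pos_of_ne_zero (by simp [a.den_nz, b.den_nz])
  have ha : (a : ℝ) * a.den = a.num := by
    rw [Rat.cast_def]; field_simp
  have hb : (b : ℝ) * b.den = b.num := by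
    rw [Rat.cast_def]; field_simp
  have e1 : d • ((a : ℝ) • p + (b : ℝ) • q)
      = ((a.num * b.den : ℤ) : ℝ) • p + ((b.num * a.den : ℤ) : ℝ) • q := by
    rw [smul_add, smul_smul, smul_smul]
    congr 2 <;> push_cast <;> rw [hd]
    · linear_combination (b.den : ℝ) * ha
    · linear_combination (a.den : ℝ) * hb
  have e2 : d • ((a : ℝ) • p - (b : ℝ) • q)
      = ((a.num * b.den : ℤ) : ℝ) • p - ((b.num * a.den : ℤ) : ℝ) • q := by
    rw [smul_sub, smul_smul, smul_smul]
    congr 2 <;> push_cast <;> rw [hd]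
    · linear_combination (b.den : ℝ) * ha
    · linear_combination (a.den : ℝ) * hb
  have key := ortho_zsmul_zsmul V hA p q hpq (a.num * b.den) (b.num * a.den)
  rw [← e1, ← e2, norm_smul, norm_smul] at key
  exact mul_left_cancel₀ (norm_ne_zero_iff.mpr hd0.ne') key
end

section
/- Let V be a real normed space satisfying the Aronszajn criterion. If p and q are nonzero vectors with ‖p + q‖ = ‖p - q‖, then for all real numbers a and b, ‖a • p + b • q‖ = ‖a • p - b • q‖. -/
theorem stmt_4 (V : Type*) [NormedAddCommGroup V] [NormedSpace ℝ V]
    (hA : ∀ v₁ w₁ v₂ w₂ : V, ‖v₁‖ = ‖v₂‖ → ‖w₁‖ = ‖w₂‖ → ‖v₁ - w₁‖ = ‖v₂ - w₂‖ → ‖v₁ + w₁‖ = ‖v₂ + w₂‖)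
    (p q : V) (hp : p ≠ 0) (hq : q ≠ 0) (hpq : ‖p + q‖ = ‖p - q‖) :
    ∀ a b : ℝ, ‖a • p + b • q‖ = ‖a • p - b • q‖ := by
  have Lnat : ∀ (x y : V), ‖x + y‖ = ‖x - y‖ →
      ∀ n : ℕ, ‖x + (n : ℝ) • y‖ = ‖x - (n : ℝ) • y‖ := by
    intro x y h n
    induction n using Nat.strong_induction_on with
    | _ n ih =>
      match n with
      | 0 => simp
      | 1 => simpa using h
      | (k+2) =>
        have ih1 := ih (k+1) (by omega)
        have ih0 := ih k (by omega)
        have key := hA (x + ((k : ℝ) + 1) • y) y (x - ((k : ℝ) + 1) • y) (-y)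
          (by push_cast at ih1; convert ih1 using 3)
          (by simp)
          (by
            have e1 : x + ((k : ℝ) + 1) • y - y = x + (k : ℝ) • y := by module
            have e2 : x - ((k : ℝ) + 1) • y - -y = x - (k : ℝ) • y := by module
            rw [e1, e2]; exact ih0)
        have e3 : x + ((k : ℝ) + 1) • y + y = x + ((k : ℝ) + 2) • y := by module
        have e4 : x - ((k : ℝ) + 1) • y + -y = x - ((k : ℝ) + 2) • y := by module
        rw [e3, e4] at key
        push_cast
        convert key using 4 <;> ring
  have Lint : ∀ (x y : V), ‖x + y‖ = ‖x - y‖ →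
      ∀ m : ℤ, ‖x + (m : ℝ) • y‖ = ‖x - (m : ℝ) • y‖ := by
    intro x y h m
    rcases Int.natAbs_eq m with hm | hm
    · rw [hm, Int.cast_natCast]; exact Lnat x y h m.natAbs
    · rw [hm, Int.cast_neg, Int.cast_natCast]
      rw [neg_smul, ← sub_eq_add_neg, sub_neg_eq_add]
      exact (Lnat x y h m.natAbs).symm
  have Lint2 : ∀ m n : ℤ, ‖(m : ℝ) • p + (n : ℝ) • q‖ = ‖(m : ℝ) • p - (n : ℝ) • q‖ := by
    intro m n
    have hbase : ‖q + p‖ = ‖q - p‖ := by rw [add_comm, norm_sub_rev]; exact hpq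
    have h1 := Lint q p hbase m
    have h1' : ‖(m : ℝ) • p + q‖ = ‖(m : ℝ) • p - q‖ := by
      rw [add_comm, h1]; exact norm_sub_rev _ _
    exact Lint ((m : ℝ) • p) q h1' n
  have Lrat : ∀ r s : ℚ, ‖(r : ℝ) • p + (s : ℝ) • q‖ = ‖(r : ℝ) • p - (s : ℝ) • q‖ := by
    intro r s
    have hrd : ((r.den : ℝ)) ≠ 0 := Nat.cast_ne_zero.mpr r.den_nz
    have hsd : ((s.den : ℝ)) ≠ 0 := Nat.cast_ne_zero.mpr s.den_nz
    set k : ℝ := ((r.den : ℝ) * (s.den : ℝ)) with hk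
    have hkne : k ≠ 0 := mul_ne_zero hrd hsd
    have em : (r : ℝ) = k⁻¹ * ((r.num * (s.den : ℤ) : ℤ) : ℝ) := by
      rw [Rat.cast_def]; field_simp [hk]; rw [hk]; push_cast; ring
    have en : (s : ℝ) = k⁻¹ * ((s.num * (r.den : ℤ) : ℤ) : ℝ) := by
      rw [Rat.cast_def]; field_simp [hk]; rw [hk]; push_cast; ring
    rw [em, en, mul_smul, mul_smul, ← smul_add, ← smul_sub, norm_smul, norm_smul,
      Lint2 (r.num * (s.den : ℤ)) (s.num * (r.den : ℤ))]
  have hF : Continuous fun z : ℝ × ℝ => ‖z.1 • p + z.2 • q‖ := by fun_prop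
  have hG : Continuous fun z : ℝ × ℝ => ‖z.1 • p - z.2 • q‖ := by fun_prop
  have hdense : Dense ((Set.range ((↑) : ℚ → ℝ)) ×ˢ (Set.range ((↑) : ℚ → ℝ))) :=
    Dense.prod Rat.denseRange_cast Rat.denseRange_cast
  have heq : (fun z : ℝ × ℝ => ‖z.1 • p + z.2 • q‖) = fun z => ‖z.1 • p - z.2 • q‖ := by
    apply Continuous.ext_on hdense hF hG
    rintro ⟨x, y⟩ ⟨⟨r, rfl⟩, ⟨s, rfl⟩⟩
    exact Lrat r s
  intro a b
  exact congrFun heq (a, b)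
end

section
/- Let V be a 2-dimensional real normed space satisfying the Aronszajn criterion. If p and q are nonzero vectors with ‖p + q‖ = ‖p - q‖, then there exists a linear isometric equivalence μ : V → V such that μ(p) = p and μ(q) = -q. -/
/-- From the Aronszajn criterion, isosceles orthogonality is homogeneous. -/
theorem aux_orth (V : Type*) [NormedAddCommGroup V] [NormedSpace ℝ V]
    (hA : ∀ v₁ w₁ v₂ w₂ : V, ‖v₁‖ = ‖v₂‖ → ‖w₁‖ = ‖w₂‖ → ‖v₁ - w₁‖ = ‖v₂ - w₂‖ → ‖v₁ + w₁‖ = ‖v₂ + w₂‖)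
    (p q : V) (hpq : ‖p + q‖ = ‖p - q‖) : ∀ t : ℝ, ‖p + t • q‖ = ‖p - t • q‖ := by
  set S : Set ℝ := {t : ℝ | ‖p + t • q‖ = ‖p - t • q‖} with hS
  have h0 : (0 : ℝ) ∈ S := by simp [hS]
  have h1 : (1 : ℝ) ∈ S := by simpa [hS] using hpq
  have hhalf : ∀ t : ℝ, t ∈ S → t / 2 ∈ S := by
    intro t ht
    have key : ‖p + t • q + p‖ = ‖p - t • q + p‖ := by
      refine hA (p + t • q) p (p - t • q) p ht rfl ?_
      have e1 : p + t • q - p = t • q := by module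
      have e2 : p - t • q - p = -(t • q) := by module
      rw [e1, e2, norm_neg]
    have e1 : p + (t / 2) • q = (2 : ℝ)⁻¹ • (p + t • q + p) := by module
    have e2 : p - (t / 2) • q = (2 : ℝ)⁻¹ • (p - t • q + p) := by module
    show ‖p + (t / 2) • q‖ = ‖p - (t / 2) • q‖
    rw [e1, e2, norm_smul, norm_smul, key]
  have hstep : ∀ s t : ℝ, s ∈ S → t ∈ S → 2 * t - s ∈ S := by
    intro s t hs ht
    have key : ‖p + t • q + (t - s) • q‖ = ‖p - t • q + -((t - s) • q)‖ := by
      refine hA (p + t • q) ((t - s) • q) (p - t • q) (-((t - s) • q)) ht (norm_neg _).symm ?_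
      have d1 : p + t • q - (t - s) • q = p + s • q := by module
      have d2 : p - t • q - -((t - s) • q) = p - s • q := by module
      rw [d1, d2]; exact hs
    have e1 : p + t • q + (t - s) • q = p + (2 * t - s) • q := by module
    have e2 : p - t • q + -((t - s) • q) = p - (2 * t - s) • q := by module
    show ‖p + (2 * t - s) • q‖ = ‖p - (2 * t - s) • q‖
    rw [← e1, ← e2]; exact key
  have hneg : ∀ t : ℝ, t ∈ S → -t ∈ S := by
    intro t ht
    simpa using hstep t 0 ht h0
  have hpow : ∀ n : ℕ, ((2 : ℝ) ^ n)⁻¹ ∈ S := by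
    intro n
    induction n with
    | zero => simpa using h1
    | succ n ih =>
      have := hhalf _ ih
      have e : ((2 : ℝ) ^ n)⁻¹ / 2 = ((2 : ℝ) ^ (n + 1))⁻¹ := by
        rw [pow_succ]
        field_simp
      rwa [e] at this
  have hmulnat : ∀ d : ℝ, d ∈ S → ∀ m : ℕ, (m : ℝ) * d ∈ S := by
    intro d hd
    have key : ∀ m : ℕ, (m : ℝ) * d ∈ S ∧ ((m : ℝ) + 1) * d ∈ S := by
      intro m
      induction m with
      | zero => exact ⟨by simpa using h0, by simpa using hd⟩
      | succ n ih =>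
        refine ⟨by push_cast; exact ih.2, ?_⟩
        push_cast
        rw [show ((n : ℝ) + 1 + 1) * d = 2 * (((n : ℝ) + 1) * d) - (n : ℝ) * d from by ring]
        exact hstep _ _ ih.1 ih.2
    exact fun m => (key m).1
  have hdy : ∀ (m : ℤ) (n : ℕ), (m : ℝ) / 2 ^ n ∈ S := by
    intro m n
    rcases le_or_gt 0 m with hm | hm
    · have h := hmulnat _ (hpow n) m.toNat
      have e : ((m.toNat : ℕ) : ℝ) = (m : ℝ) := by exact_mod_cast congrArg Int.cast (Int.toNat_of_nonneg hm)
      rw [e] at h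
      rwa [div_eq_mul_inv]
    · have h := hmulnat _ (hpow n) (-m).toNat
      have e : (((-m).toNat : ℕ) : ℝ) = ((-m : ℤ) : ℝ) := by
        exact_mod_cast congrArg Int.cast (Int.toNat_of_nonneg (by omega))
      rw [e] at h
      have h2 := hneg _ h
      rw [show -(((-m : ℤ) : ℝ) * ((2:ℝ)^n)⁻¹) = (m : ℝ) * ((2:ℝ)^n)⁻¹ from by push_cast; ring] at h2
      rwa [div_eq_mul_inv]
  have hclosed : IsClosed S := by
    apply isClosed_eq
    · exact (continuous_const.add (continuous_id.smul continuous_const)).norm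
    · exact (continuous_const.sub (continuous_id.smul continuous_const)).norm
  intro t
  have htend : Filter.Tendsto (fun n : ℕ => ((⌊t * 2 ^ n⌋ : ℝ) / 2 ^ n)) Filter.atTop (nhds t) := by
    have hlow : Filter.Tendsto (fun n : ℕ => t - ((2 : ℝ) ^ n)⁻¹) Filter.atTop (nhds t) := by
      have h2 : Filter.Tendsto (fun n : ℕ => ((2 : ℝ)⁻¹) ^ n) Filter.atTop (nhds 0) :=
        tendsto_pow_atTop_nhds_zero_of_lt_one (by norm_num) (by norm_num)
      have := Filter.Tendsto.sub (tendsto_const_nhds (x := t)) h2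
      simpa [inv_pow] using this
    refine tendsto_of_tendsto_of_tendsto_of_le_of_le hlow tendsto_const_nhds ?_ ?_
    · intro n
      have hpos : (0 : ℝ) < 2 ^ n := by positivity
      rw [le_div_iff₀ hpos, sub_mul, inv_mul_cancel₀ (ne_of_gt hpos)]
      linarith [Int.sub_one_lt_floor (t * 2 ^ n)]
    · intro n
      have hpos : (0 : ℝ) < 2 ^ n := by positivity
      rw [div_le_iff₀ hpos]
      exact Int.floor_le _
  exact hclosed.mem_of_tendsto htend (Filter.Eventually.of_forall fun n => hdy _ n)

theorem stmt_5 (V : Type*) [NormedAddCommGroup V] [NormedSpace ℝ V]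
    [FiniteDimensional ℝ V] (hdim : Module.finrank ℝ V = 2)
    (hA : ∀ v₁ w₁ v₂ w₂ : V, ‖v₁‖ = ‖v₂‖ → ‖w₁‖ = ‖w₂‖ → ‖v₁ - w₁‖ = ‖v₂ - w₂‖ → ‖v₁ + w₁‖ = ‖v₂ + w₂‖)
    (p q : V) (hp : p ≠ 0) (hq : q ≠ 0) (hpq : ‖p + q‖ = ‖p - q‖) :
    ∃ μ : V ≃ₗᵢ[ℝ] V, μ p = p ∧ μ q = -q := by
  have horth := aux_orth V hA p q hpq
  -- general scaled version
  have hab : ∀ a b : ℝ, ‖a • p + b • q‖ = ‖a • p - b • q‖ := by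
    intro a b
    rcases eq_or_ne a 0 with ha | ha
    · simp [ha]
    · have e1 : a • p + b • q = a • (p + (b / a) • q) := by
        rw [smul_add, smul_smul, mul_div_cancel₀ _ ha]
      have e2 : a • p - b • q = a • (p - (b / a) • q) := by
        rw [smul_sub, smul_smul, mul_div_cancel₀ _ ha]
      rw [e1, e2, norm_smul, norm_smul, horth]
  -- p, q are linearly independent
  have hli : LinearIndependent ℝ ![p, q] := by
    rw [LinearIndependent.pair_iff]
    intro s t hst
    have h2 : ‖s • p - t • q‖ = 0 := by rw [← hab]; simp [hst]
    have h3 : s • p - t • q = 0 := norm_eq_zero.mp h2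
    have ht : t = 0 := by
      have h4 : (2 * t) • q = 0 := by
        have e : (2 * t) • q = (s • p + t • q) - (s • p - t • q) := by module
        rw [e, hst, h3, sub_zero]
      rcases smul_eq_zero.mp h4 with h | h
      · linarith
      · exact absurd h hq
    have hs : s = 0 := by
      rw [ht, zero_smul, add_zero] at hst
      rcases smul_eq_zero.mp hst with h | h
      · exact h
      · exact absurd h hp
    exact ⟨hs, ht⟩
  -- basis
  have hcard : Fintype.card (Fin 2) = Module.finrank ℝ V := by simp [hdim]
  let B : Module.Basis (Fin 2) ℝ V := basisOfLinearIndependentOfCardEqFinrank hli hcard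
  have hB : ∀ i, B i = ![p, q] i := fun i => by
    simp [B, coe_basisOfLinearIndependentOfCardEqFinrank]
  have hB0 : B 0 = p := hB 0
  have hB1 : B 1 = q := hB 1
  let f : V →ₗ[ℝ] V := B.constr ℝ ![p, -q]
  have hfp : f p = p := by
    show B.constr ℝ ![p, -q] p = p
    rw [← hB0, B.constr_basis]
    simp
  have hfq : f q = -q := by
    show B.constr ℝ ![p, -q] q = -q
    rw [← hB1, B.constr_basis]
    simp
  have hnorm : ∀ x : V, ‖f x‖ = ‖x‖ := by
    intro x
    have hx : x = B.repr x 0 • p + B.repr x 1 • q := by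
      conv_lhs => rw [← B.sum_repr x]
      rw [Fin.sum_univ_two, hB0, hB1]
    rw [hx]
    rw [map_add, map_smul, map_smul, hfp, hfq]
    rw [show B.repr x 0 • p + B.repr x 1 • (-q) = B.repr x 0 • p - B.repr x 1 • q from by module]
    exact (hab _ _).symm
  have hinj : Function.Injective f := by
    intro x y hxy
    have := hnorm (x - y)
    rw [map_sub, hxy, sub_self, norm_zero] at this
    exact sub_eq_zero.mp (norm_eq_zero.mp this.symm)
  have hbij : Function.Bijective f :=
    ⟨hinj, (LinearMap.injective_iff_surjective).mp hinj⟩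
  let e : V ≃ₗ[ℝ] V := LinearEquiv.ofBijective f hbij
  refine ⟨⟨e, fun x => hnorm x⟩, ?_, ?_⟩
  · show e p = p; simpa [e, LinearEquiv.ofBijective_apply] using hfp
  · show e q = -q; simpa [e, LinearEquiv.ofBijective_apply] using hfq
end

section
/- Let V be a real normed space and e₁ a unit vector in V. If x is a unit vector with e₁ and x linearly independent, then there exists a unit vector e₂ in the span of e₁ and x such that ‖e₁ + e₂‖ = ‖e₁ - e₂‖. -/
theorem stmt_6 (V : Type*) [NormedAddCommGroup V] [NormedSpace ℝ V]
    (e₁ x : V) (he₁ : ‖e₁‖ = 1) (hx : ‖x‖ = 1)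
    (hind : LinearIndependent ℝ ![e₁, x]) :
    ∃ e₂ ∈ Submodule.span ℝ {e₁, x}, ‖e₂‖ = 1 ∧ ‖e₁ + e₂‖ = ‖e₁ - e₂‖ := by
  have hpair := LinearIndependent.pair_iff.mp hind
  -- path γ(s) = s • e₁ + (1 - |s|) • x
  set γ : ℝ → V := fun s => s • e₁ + (1 - |s|) • x with hγ
  have hγne : ∀ s, γ s ≠ 0 := by
    intro s hs
    rcases hpair s (1 - |s|) hs with ⟨h1, h2⟩
    simp [h1, abs_zero] at h2
  have hγcont : Continuous γ := by
    apply Continuous.add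
    · exact (continuous_id).smul continuous_const
    · exact (continuous_const.sub continuous_abs).smul continuous_const
  set u : ℝ → V := fun s => ‖γ s‖⁻¹ • γ s with hu
  have hucont : Continuous u := by
    apply Continuous.smul
    · exact (hγcont.norm).inv₀ (fun s => norm_ne_zero_iff.mpr (hγne s))
    · exact hγcont
  have hunorm : ∀ s, ‖u s‖ = 1 := by
    intro s
    rw [hu]
    rw [norm_smul, norm_inv, norm_norm, inv_mul_cancel₀ (norm_ne_zero_iff.mpr (hγne s))]
  set F : ℝ → ℝ := fun s => ‖e₁ + u s‖ - ‖e₁ - u s‖ with hF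
  have hFcont : Continuous F := by
    apply Continuous.sub
    · exact (continuous_const.add hucont).norm
    · exact (continuous_const.sub hucont).norm
  have hγ1 : γ 1 = e₁ := by simp [hγ]
  have hγm1 : γ (-1) = -e₁ := by simp [hγ]
  have hu1 : u 1 = e₁ := by simp [hu, hγ1, he₁]
  have hum1 : u (-1) = -e₁ := by simp [hu, hγm1, he₁]
  have hF1 : F 1 = 2 := by
    simp only [hF, hu1]
    have : e₁ + e₁ = (2:ℝ) • e₁ := by module
    rw [this, norm_smul, he₁]
    simp
  have hFm1 : F (-1) = -2 := by
    simp only [hF, hum1]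
    have h1 : e₁ + -e₁ = 0 := by module
    have h2 : e₁ - -e₁ = (2:ℝ) • e₁ := by module
    rw [h1, h2, norm_smul, he₁]
    simp
  have hIVT := intermediate_value_Icc (by norm_num : (-1:ℝ) ≤ 1) hFcont.continuousOn
  have h0 : (0:ℝ) ∈ Set.Icc (F (-1)) (F 1) := by rw [hF1, hFm1]; norm_num
  obtain ⟨s, _, hs⟩ := hIVT h0
  refine ⟨u s, ?_, hunorm s, ?_⟩
  · apply Submodule.smul_mem
    apply Submodule.add_mem
    · exact Submodule.smul_mem _ _ (Submodule.subset_span (Set.mem_insert _ _))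
    · exact Submodule.smul_mem _ _ (Submodule.subset_span (Set.mem_insert_of_mem _ rfl))
  · have : ‖e₁ + u s‖ - ‖e₁ - u s‖ = 0 := hs
    linarith
end

section
/- Let V be a 2-dimensional real normed space such that whenever p and q are nonzero vectors with ‖p + q‖ = ‖p - q‖, there exists a linear isometry μ : V → V with μ(p) = p and μ(q) = -q. Then the norm of V arises from an inner product, i.e., there exists an inner product ⟪·,·⟫ on V with ‖v‖² = ⟪v, v⟫ for all v. -/
open MeasureTheory Topology Function Set

noncomputable section Stmt7Aux

open MeasureTheory Topology Function Set

noncomputable section Stmt7Aux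

variable (V : Type*) [NormedAddCommGroup V] [NormedSpace ℝ V] [FiniteDimensional ℝ V]

/-- The group of isometric invertible continuous linear maps. -/
def isomG : Subgroup (V →L[ℝ] V)ˣ where
  carrier := {u | ∀ v : V, ‖(u : V →L[ℝ] V) v‖ = ‖v‖}
  one_mem' := by intro v; simp
  mul_mem' := by
    intro a b ha hb v
    have : ((a : V →L[ℝ] V) * (b : V →L[ℝ] V)) v = (a : V →L[ℝ] V) ((b : V →L[ℝ] V) v) := rfl
    rw [Units.val_mul, this, ha, hb]
  inv_mem' := by
    intro a ha v
    have h1 : (a : V →L[ℝ] V) (((a⁻¹ : _) : V →L[ℝ] V) v) = v := by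
      have : ((a : V →L[ℝ] V) * ((a⁻¹ : _) : V →L[ℝ] V)) v = v := by
        rw [← Units.val_mul, mul_inv_cancel]; rfl
      exact this
    have := ha (((a⁻¹ : _) : V →L[ℝ] V) v)
    rw [h1] at this
    exact this.symm

theorem isCompact_isomG : IsCompact ((isomG V : Set (V →L[ℝ] V)ˣ)) := by
  rw [Units.isEmbedding_embedProduct.isCompact_iff]
  have himg : (Units.embedProduct _) '' (isomG V : Set (V →L[ℝ] V)ˣ) =
      {p : (V →L[ℝ] V) × (V →L[ℝ] V)ᵐᵒᵖ |
        (∀ v : V, ‖p.1 v‖ = ‖v‖) ∧ (∀ v : V, ‖(MulOpposite.unop p.2) v‖ = ‖v‖) ∧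
        p.1 * MulOpposite.unop p.2 = 1 ∧ MulOpposite.unop p.2 * p.1 = 1} := by
    ext p
    constructor
    · rintro ⟨u, hu, rfl⟩
      refine ⟨hu, ?_, ?_, ?_⟩
      · intro v
        have := (isomG V).inv_mem hu
        exact this v
      · exact u.val_inv
      · exact u.inv_val
    · rintro ⟨h1, h2, h3, h4⟩
      refine ⟨Units.mk p.1 (MulOpposite.unop p.2) h3 h4, h1, rfl⟩
  rw [himg]
  have hK1 : IsCompact (Metric.closedBall (0 : V →L[ℝ] V) 1) :=
    isCompact_closedBall 0 1
  have hK2 : IsCompact (MulOpposite.op '' Metric.closedBall (0 : V →L[ℝ] V) 1) :=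
    hK1.image MulOpposite.continuous_op
  apply IsCompact.of_isClosed_subset (hK1.prod hK2)
  · have hA : IsClosed {p : (V →L[ℝ] V) × (V →L[ℝ] V)ᵐᵒᵖ | ∀ v : V, ‖p.1 v‖ = ‖v‖} := by
      rw [Set.setOf_forall]
      exact isClosed_iInter fun v => isClosed_eq
        (((ContinuousLinearMap.apply ℝ V v).continuous.comp continuous_fst).norm)
        continuous_const
    have hB : IsClosed {p : (V →L[ℝ] V) × (V →L[ℝ] V)ᵐᵒᵖ |
        ∀ v : V, ‖(MulOpposite.unop p.2) v‖ = ‖v‖} := by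
      rw [Set.setOf_forall]
      exact isClosed_iInter fun v => isClosed_eq
        (((ContinuousLinearMap.apply ℝ V v).continuous.comp
          (MulOpposite.continuous_unop.comp continuous_snd)).norm)
        continuous_const
    have hC : IsClosed {p : (V →L[ℝ] V) × (V →L[ℝ] V)ᵐᵒᵖ |
        p.1 * MulOpposite.unop p.2 = 1} :=
      isClosed_eq (continuous_fst.mul (MulOpposite.continuous_unop.comp continuous_snd))
        continuous_const
    have hD : IsClosed {p : (V →L[ℝ] V) × (V →L[ℝ] V)ᵐᵒᵖ |
        MulOpposite.unop p.2 * p.1 = 1} :=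
      isClosed_eq ((MulOpposite.continuous_unop.comp continuous_snd).mul continuous_fst)
        continuous_const
    have : {p : (V →L[ℝ] V) × (V →L[ℝ] V)ᵐᵒᵖ |
        (∀ v : V, ‖p.1 v‖ = ‖v‖) ∧ (∀ v : V, ‖(MulOpposite.unop p.2) v‖ = ‖v‖) ∧
        p.1 * MulOpposite.unop p.2 = 1 ∧ MulOpposite.unop p.2 * p.1 = 1} =
        {p | ∀ v : V, ‖p.1 v‖ = ‖v‖} ∩ ({p | ∀ v : V, ‖(MulOpposite.unop p.2) v‖ = ‖v‖} ∩
          ({p | p.1 * MulOpposite.unop p.2 = 1} ∩ {p | MulOpposite.unop p.2 * p.1 = 1})) := rfl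
    rw [this]
    exact hA.inter (hB.inter (hC.inter hD))
  · rintro p ⟨h1, h2, h3, h4⟩
    constructor
    · rw [Metric.mem_closedBall, dist_zero_right]
      exact ContinuousLinearMap.opNorm_le_bound _ zero_le_one fun v => by
        rw [h1 v, one_mul]
    · refine ⟨MulOpposite.unop p.2, ?_, MulOpposite.op_unop _⟩
      rw [Metric.mem_closedBall, dist_zero_right]
      exact ContinuousLinearMap.opNorm_le_bound _ zero_le_one fun v => by
        rw [h2 v, one_mul]


end Stmt7Aux

theorem stmt_7 (V : Type*) [NormedAddCommGroup V] [NormedSpace ℝ V]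
    [FiniteDimensional ℝ V] (hdim : Module.finrank ℝ V = 2)
    (hrefl : ∀ p q : V, p ≠ 0 → q ≠ 0 → ‖p + q‖ = ‖p - q‖ →
      ∃ μ : V →ₗᵢ[ℝ] V, μ p = p ∧ μ q = -q) :
    Nonempty (InnerProductSpace ℝ V) := by
  have hswap : ∀ x y : V, ‖x‖ = ‖y‖ → ∃ g : V ≃ₗᵢ[ℝ] V, g x = y := by
    intro x y hxy
    by_cases hx0 : x = 0
    · refine ⟨LinearIsometryEquiv.refl ℝ V, ?_⟩
      have : y = 0 := by rw [← norm_eq_zero, ← hxy, hx0, norm_zero]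
      simp [hx0, this]
    by_cases h1 : y = x
    · exact ⟨LinearIsometryEquiv.refl ℝ V, by simp [h1]⟩
    by_cases h2 : y = -x
    · exact ⟨LinearIsometryEquiv.neg ℝ, by simp [h2]⟩
    have hp : x + y ≠ 0 := fun h => h2 (by linear_combination (norm := module) h)
    have hq : x - y ≠ 0 := fun h => h1 (by linear_combination (norm := module) -h)
    have hnorm : ‖(x + y) + (x - y)‖ = ‖(x + y) - (x - y)‖ := by
      have e1 : (x + y) + (x - y) = (2:ℝ) • x := by module
      have e2 : (x + y) - (x - y) = (2:ℝ) • y := by module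
      rw [e1, e2, norm_smul, norm_smul, hxy]
    obtain ⟨μ, hμp, hμq⟩ := hrefl _ _ hp hq hnorm
    refine ⟨μ.toLinearIsometryEquiv rfl, ?_⟩
    have hx : x = (2:ℝ)⁻¹ • ((x + y) + (x - y)) := by module
    have : μ x = y := by
      conv_lhs => rw [hx]
      rw [_root_.map_smul, _root_.map_add, hμp, hμq]
      module
    simpa using this
  classical
  set G : Subgroup (V →L[ℝ] V)ˣ := isomG V with hG
  letI : MeasurableSpace G := borel G
  haveI : BorelSpace G := ⟨rfl⟩
  haveI : CompactSpace G := isCompact_iff_compactSpace.mp (isCompact_isomG V)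
  haveI : Nonempty G := ⟨1⟩
  set K₀ : TopologicalSpace.PositiveCompacts G := ⊤ with hK₀
  set μ : Measure G := Measure.haarMeasure K₀ with hμ
  haveI : IsProbabilityMeasure μ := by
    constructor
    have : (univ : Set G) = (K₀ : Set G) := (TopologicalSpace.PositiveCompacts.coe_top).symm
    rw [this, hμ]
    exact Measure.haarMeasure_self
  -- the action
  set act : G → V →L[ℝ] V := fun g => ((g : (V →L[ℝ] V)ˣ) : V →L[ℝ] V) with hact
  have act_mul : ∀ (a b : G) (v : V), act a (act b v) = act (a * b) v := fun _ _ _ => rfl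
  have act_norm : ∀ (g : G) (v : V), ‖act g v‖ = ‖v‖ := fun g v => g.2 v
  have act_cont : ∀ v : V, Continuous fun g : G => act g v := by
    intro v
    exact (ContinuousLinearMap.apply ℝ V v).continuous.comp
      (Units.continuous_val.comp continuous_subtype_val)
  -- auxiliary inner product
  set E : V ≃L[ℝ] EuclideanSpace ℝ (Fin (Module.finrank ℝ V)) := toEuclidean with hE
  set φ : V → V → G → ℝ := fun u v g => inner ℝ (E (act g⁻¹ u)) (E (act g⁻¹ v)) with hφ
  have φcont : ∀ u v, Continuous (φ u v) := by
    intro u v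
    have h1 : Continuous fun g : G => E (act g⁻¹ u) :=
      E.continuous.comp ((act_cont u).comp continuous_inv)
    have h2 : Continuous fun g : G => E (act g⁻¹ v) :=
      E.continuous.comp ((act_cont v).comp continuous_inv)
    exact h1.inner h2
  have φint : ∀ u v, Integrable (φ u v) μ := fun u v =>
    (φcont u v).integrable_of_hasCompactSupport (HasCompactSupport.of_compactSpace _)
  set B : V → V → ℝ := fun u v => ∫ g, φ u v g ∂μ with hB
  have Bsymm : ∀ u v, B u v = B v u := by
    intro u v
    apply integral_congr_ae
    filter_upwards with g
    exact real_inner_comm _ _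
  have Badd : ∀ u u' v, B (u + u') v = B u v + B u' v := by
    intro u u' v
    rw [hB]
    have : ∀ g : G, φ (u + u') v g = φ u v g + φ u' v g := by
      intro g
      simp only [hφ, map_add, inner_add_left]
    simp only [this]
    exact integral_add (φint u v) (φint u' v)
  have Bsmul : ∀ (c : ℝ) u v, B (c • u) v = c * B u v := by
    intro c u v
    rw [hB]
    have : ∀ g : G, φ (c • u) v g = c * φ u v g := by
      intro g
      simp only [hφ, _root_.map_smul, real_inner_smul_left]
    simp only [this]
    exact integral_const_mul c _
  have Binv : ∀ (g₀ : G) u v, B (act g₀ u) (act g₀ v) = B u v := by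
    intro g₀ u v
    rw [hB]
    have h1 : ∀ g : G, φ (act g₀ u) (act g₀ v) g = φ u v (g₀⁻¹ * g) := by
      intro g
      simp only [hφ]
      rw [act_mul, act_mul, mul_inv_rev, inv_inv]
    simp only [h1]
    exact integral_mul_left_eq_self (φ u v) g₀⁻¹
  have Bpos : ∀ v : V, v ≠ 0 → 0 < B v v := by
    intro v hv
    rw [hB]
    rw [integral_pos_iff_support_of_nonneg]
    · have : support (φ v v) = univ := by
        ext g
        simp only [mem_support, mem_univ, iff_true]
        have hgv : act g⁻¹ v ≠ 0 := by
          intro h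
          apply hv
          have := act_norm g⁻¹ v
          rw [h, norm_zero] at this
          exact norm_eq_zero.mp this.symm
        have hne : E (act g⁻¹ v) ≠ 0 := fun h => hgv (by simpa using congrArg E.symm h)
        have : (0:ℝ) < inner ℝ (E (act g⁻¹ v)) (E (act g⁻¹ v)) := by
          rw [real_inner_self_eq_norm_sq]
          exact pow_pos (norm_pos_iff.mpr hne) 2
        exact ne_of_gt this
      rw [this, measure_univ]
      norm_num
    · intro g
      exact real_inner_self_nonneg
    · exact φint v v
  -- transitivity: B constant on spheres
  have toUnit : ∀ g : V ≃ₗᵢ[ℝ] V, ∃ u : G, ∀ v, act u v = g v := by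
    intro g
    have hval : (g.toLinearIsometry.toContinuousLinearMap : V →L[ℝ] V) *
        (g.symm.toLinearIsometry.toContinuousLinearMap) = 1 := by
      ext v
      exact g.apply_symm_apply v
    have hinv : (g.symm.toLinearIsometry.toContinuousLinearMap : V →L[ℝ] V) *
        (g.toLinearIsometry.toContinuousLinearMap) = 1 := by
      ext v
      exact g.symm_apply_apply v
    refine ⟨⟨Units.mk g.toLinearIsometry.toContinuousLinearMap
      g.symm.toLinearIsometry.toContinuousLinearMap hval hinv, ?_⟩, fun v => rfl⟩
    exact fun v => g.norm_map v
  have hsph : ∀ x y : V, ‖x‖ = ‖y‖ → B x x = B y y := by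
    intro x y h
    obtain ⟨g, hg⟩ := hswap x y h
    obtain ⟨u, hu⟩ := toUnit g
    have := Binv u x x
    rw [hu, hg] at this
    exact this.symm
  -- normalize
  haveI : Nontrivial V := by
    exact Module.nontrivial_of_finrank_pos (R := ℝ) (by rw [hdim]; norm_num)
  obtain ⟨v₀, hv₀⟩ := exists_ne (0 : V)
  set x₀ : V := ‖v₀‖⁻¹ • v₀ with hx₀
  have hx₀1 : ‖x₀‖ = 1 := norm_smul_inv_norm hv₀
  set r : ℝ := B x₀ x₀ with hr
  have hrpos : 0 < r := Bpos x₀ (by intro h; rw [h, norm_zero] at hx₀1; norm_num at hx₀1)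
  have Bnorm : ∀ v : V, B v v = ‖v‖ ^ 2 * r := by
    intro v
    by_cases hv : v = 0
    · have : B (0 : V) 0 = 0 := by
        have := Bsmul 0 0 0
        simpa using this
      rw [hv, this, norm_zero]
      ring
    · set u : V := ‖v‖⁻¹ • v with hu
      have hu1 : ‖u‖ = 1 := norm_smul_inv_norm hv
      have hvu : v = ‖v‖ • u := by
        rw [hu, smul_smul, mul_inv_cancel₀ (norm_ne_zero_iff.mpr hv), one_smul]
      calc B v v = B (‖v‖ • u) (‖v‖ • u) := by rw [← hvu]
        _ = ‖v‖ * B u (‖v‖ • u) := Bsmul _ _ _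
        _ = ‖v‖ * (‖v‖ * B u u) := by
            rw [Bsymm u (‖v‖ • u), Bsmul, Bsymm u u]
        _ = ‖v‖ ^ 2 * B u u := by ring
        _ = ‖v‖ ^ 2 * r := by rw [hsph u x₀ (by rw [hu1, hx₀1])]
  -- build the inner product space
  refine ⟨{ (inferInstance : NormedSpace ℝ V) with
    inner := fun u v => B u v / r
    norm_sq_eq_re_inner := ?_
    conj_inner_symm := ?_
    add_left := ?_
    smul_left := ?_ }⟩
  · intro x
    show ‖x‖ ^ 2 = RCLike.re (B x x / r)
    simp only [RCLike.re_to_real]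
    rw [Bnorm x, mul_div_cancel_right₀ _ (ne_of_gt hrpos)]
  · intro x y
    show (starRingEnd ℝ) (B y x / r) = B x y / r
    simp only [starRingEnd_apply, star_trivial]
    rw [Bsymm]
  · intro x y z
    show B (x + y) z / r = B x z / r + B y z / r
    rw [Badd, add_div]
  · intro x y c
    show B (c • x) y / r = (starRingEnd ℝ) c * (B x y / r)
    simp only [starRingEnd_apply, star_trivial]
    rw [Bsmul, mul_div_assoc]
end Stmt7Aux
end

section
/- Let V be a real normed space. The norm on V arises from an inner product if and only if the norm restricted to every subspace of dimension at most 3 arises from an inner product. -/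
theorem stmt_9 (V : Type*) [NormedAddCommGroup V] [NormedSpace ℝ V] :
    Nonempty (InnerProductSpace ℝ V) ↔
      ∀ U : Submodule ℝ V, Module.rank ℝ U ≤ 3 → Nonempty (InnerProductSpace ℝ U) := by
  constructor
  · rintro ⟨i⟩ U _
    refine ⟨InnerProductSpace.ofNorm ℝ fun x y => ?_⟩
    simpa [Submodule.coe_norm, sq] using parallelogram_law_with_norm ℝ (x : V) (y : V)
  · intro h
    refine ⟨InnerProductSpace.ofNorm ℝ fun x y => ?_⟩
    set U := Submodule.span ℝ ({x, y} : Set V) with hU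
    have hrank : Module.rank ℝ U ≤ 3 := by
      refine le_trans (rank_span_le _) ?_
      refine le_trans (Cardinal.mk_insert_le ..) ?_
      simp only [Cardinal.mk_singleton]
      norm_num
    obtain ⟨i⟩ := h U hrank
    have hx : x ∈ U := Submodule.subset_span (by simp)
    have hy : y ∈ U := Submodule.subset_span (by simp)
    have := parallelogram_law_with_norm ℝ (⟨x, hx⟩ : U) (⟨y, hy⟩ : U)
    simpa [Submodule.coe_norm, sq] using this
end

section
/- Let V be a real normed space such that every 2-dimensional subspace of V is euclidean (i.e., the restricted norm arises from an inner product). Then V is euclidean: there exists an inner product on V inducing its norm. -/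
theorem stmt_10 (V : Type*) [NormedAddCommGroup V] [NormedSpace ℝ V]
    (h2 : ∀ U : Submodule ℝ V, Module.rank ℝ U = 2 → Nonempty (InnerProductSpace ℝ U)) :
    Nonempty (InnerProductSpace ℝ V) := by
  refine ⟨InnerProductSpace.ofNorm ℝ fun x y => ?_⟩
  by_cases hx : x = 0
  · subst hx; simp; ring
  by_cases hxy : ∃ a : ℝ, a • x = y
  · obtain ⟨a, rfl⟩ := hxy
    have h1 : x + a • x = (1 + a) • x := by module
    have h2 : x - a • x = (1 - a) • x := by module
    rw [h1, h2, norm_smul, norm_smul, norm_smul]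
    simp only [Real.norm_eq_abs]
    ring_nf
    simp only [sq_abs]
    ring
  · have hind : LinearIndependent ℝ ((↑) : ({x, y} : Set V) → V) :=
      linearIndepOn_id_pair hx (fun a => by intro h; exact hxy ⟨a, h⟩)
    have hne : x ≠ y := by intro h; exact hxy ⟨1, by simp [h]⟩
    set U := Submodule.span ℝ ({x, y} : Set V) with hU
    have hrank : Module.rank ℝ U = 2 := by
      rw [hU, rank_span_set hind, Cardinal.mk_insert (by simp [hne]), Cardinal.mk_singleton]
      norm_num
    obtain ⟨ips⟩ := h2 U hrank
    have hxm : x ∈ U := Submodule.subset_span (by simp)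
    have hym : y ∈ U := Submodule.subset_span (by simp)
    have := parallelogram_law_with_norm ℝ (⟨x, hxm⟩ : U) ⟨y, hym⟩
    simpa [Submodule.coe_norm, ← pow_two] using this
end

section
/- Let V be a real normed space. Then the following are equivalent: (i) the Aronszajn criterion holds in V (for all v₁, w₁, v₂, w₂, if ‖v₁‖ = ‖v₂‖, ‖w₁‖ = ‖w₂‖ and ‖v₁ - w₁‖ = ‖v₂ - w₂‖, then ‖v₁ + w₁‖ = ‖v₂ + w₂‖); (ii) the norm of V arises from an inner product; (iii) the parallelogram identity ‖v + w‖² + ‖v - w‖² = 2‖v‖² + 2‖w‖² holds for all v, w in V. -/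
set_option linter.unusedSectionVars false

open scoped RealInnerProductSpace

section PartA
variable {V : Type*} [NormedAddCommGroup V] [NormedSpace ℝ V]

/-- Aronszajn's criterion. -/
def Acrit (V : Type*) [NormedAddCommGroup V] [NormedSpace ℝ V] : Prop :=
  ∀ v₁ w₁ v₂ w₂ : V, ‖v₁‖ = ‖v₂‖ → ‖w₁‖ = ‖w₂‖ → ‖v₁ - w₁‖ = ‖v₂ - w₂‖ →
    ‖v₁ + w₁‖ = ‖v₂ + w₂‖

/-- Symmetry (Ficken-type) property for coefficients `a b`. -/
def FSym (V : Type*) [NormedAddCommGroup V] [NormedSpace ℝ V] (a b : ℝ) : Prop :=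
  ∀ x y : V, ‖x‖ = ‖y‖ → ‖a • x + b • y‖ = ‖b • x + a • y‖

variable (V)

lemma fsym_zero (a : ℝ) : FSym V a 0 := by
  intro x y h
  simp [norm_smul, h]

lemma fsym_diag (a : ℝ) : FSym V a a := by
  intro x y h
  rw [add_comm]

variable {V}

lemma fsym_swap {a b : ℝ} (h : FSym V a b) : FSym V b a := by
  intro x y hxy
  exact (h x y hxy).symm

lemma fsym_neg (hA : Acrit V) {a b : ℝ} (h : FSym V a b) : FSym V a (-b) := by
  intro x y hxy
  have key := hA (a • x) ((-b) • y) (a • y) ((-b) • x)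
    (by simp [norm_smul, hxy]) (by simp [norm_smul, hxy])
    (by
      have h1 : a • x - (-b) • y = a • x + b • y := by module
      have h2 : a • y - (-b) • x = b • x + a • y := by module
      rw [h1, h2]; exact h x y hxy)
  rw [key, add_comm]

lemma fsym_neg_iff (hA : Acrit V) {a b : ℝ} : FSym V a b ↔ FSym V a (-b) := by
  constructor
  · exact fsym_neg hA
  · intro h; have := fsym_neg hA h; simpa using this

lemma fsym_step (hA : Acrit V) {a b c : ℝ} (h1 : FSym V a b) (h2 : FSym V a (b - c)) :
    FSym V a (b + c) := by
  intro x y hxy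
  have key := hA (a • x + b • y) (c • y) (a • y + b • x) (c • x)
    (by rw [h1 x y hxy, add_comm (b • x)]) (by simp [norm_smul, hxy])
    (by
      have e1 : a • x + b • y - c • y = a • x + (b - c) • y := by module
      have e2 : a • y + b • x - c • x = (b - c) • x + a • y := by module
      rw [e1, e2]; exact h2 x y hxy)
  have e3 : a • x + b • y + c • y = a • x + (b + c) • y := by module
  have e4 : a • y + b • x + c • x = (b + c) • x + a • y := by module
  rw [e3, e4] at key
  exact key

lemma fsym_scale {a b : ℝ} (t : ℝ) (h : FSym V a b) : FSym V (t * a) (t * b) := by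
  intro x y hxy
  have e1 : (t * a) • x + (t * b) • y = t • (a • x + b • y) := by module
  have e2 : (t * b) • x + (t * a) • y = t • (b • x + a • y) := by module
  rw [e1, e2, norm_smul, norm_smul, h x y hxy]

end PartA

section PartA2
variable {V : Type*} [NormedAddCommGroup V] [NormedSpace ℝ V]

lemma fsym_neg_fst (hA : Acrit V) {a b : ℝ} (h : FSym V a b) : FSym V (-a) b :=
  fsym_swap (fsym_neg hA (fsym_swap h))

lemma fsym_congr {a b a' b' : ℝ} (ha : a = a') (hb : b = b') (h : FSym V a b) :
    FSym V a' b' := ha ▸ hb ▸ h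

lemma fsym_nat (hA : Acrit V) : ∀ N m n : ℕ, m + n ≤ N → FSym V (m : ℝ) (n : ℝ) := by
  intro N
  induction N with
  | zero =>
    intro m n h
    have hm : m = 0 := by omega
    have hn : n = 0 := by omega
    subst hm; subst hn
    simpa using fsym_diag V (0:ℝ)
  | succ N ih =>
    have key : ∀ m n : ℕ, m < n → m + n ≤ N + 1 → FSym V (m : ℝ) (n : ℝ) := by
      intro m n hlt hmn
      by_cases hm : m = 0
      · subst hm
        simpa using fsym_swap (fsym_zero V (n : ℝ))
      · have hm1 : 1 ≤ m := Nat.one_le_iff_ne_zero.mpr hm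
        have h1 : FSym V (m : ℝ) ((n - m : ℕ) : ℝ) := ih m (n - m) (by omega)
        have h2 : FSym V (m : ℝ) ((n : ℝ) - 2 * m) := by
          by_cases h2m : 2 * m ≤ n
          · have := ih m (n - 2 * m) (by omega)
            exact fsym_congr rfl (by push_cast [Nat.cast_sub h2m]; ring) this
          · have := ih m (2 * m - n) (by omega)
            have := fsym_neg hA this
            exact fsym_congr rfl (by push_cast [Nat.cast_sub (le_of_not_ge h2m)]; ring) this
        have h1' : FSym V (m : ℝ) ((n : ℝ) - m) :=
          fsym_congr rfl (by push_cast [Nat.cast_sub (le_of_lt hlt)]; ring) h1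
        have h2' : FSym V (m : ℝ) (((n : ℝ) - m) - m) :=
          fsym_congr rfl (by ring) h2
        have := fsym_step hA h1' h2'
        exact fsym_congr rfl (by ring) this
    intro m n hmn
    rcases lt_trichotomy m n with hlt | heq | hgt
    · exact key m n hlt hmn
    · subst heq; exact fsym_diag V _
    · exact fsym_swap (key n m hgt (by omega))

lemma fsym_int (hA : Acrit V) (m n : ℤ) : FSym V (m : ℝ) (n : ℝ) := by
  have base : ∀ a b : ℕ, FSym V (a : ℝ) (b : ℝ) := fun a b => fsym_nat hA (a + b) a b le_rfl
  have pos : ∀ k : ℤ, 0 ≤ k → ((k.toNat : ℕ) : ℝ) = (k : ℝ) := fun k hk => by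
    exact_mod_cast congrArg (fun z : ℤ => (z : ℝ)) (Int.toNat_of_nonneg hk)
  rcases le_or_gt 0 m with hm | hm <;> rcases le_or_gt 0 n with hn | hn
  · exact fsym_congr (pos m hm) (pos n hn) (base m.toNat n.toNat)
  · have hn' : ((((-n).toNat : ℕ)) : ℝ) = -(n : ℝ) := by
      have := pos (-n) (by omega); push_cast at this ⊢; linarith
    exact fsym_congr (pos m hm) (by rw [hn']; ring) (fsym_neg hA (base m.toNat (-n).toNat))
  · have hm' : ((((-m).toNat : ℕ)) : ℝ) = -(m : ℝ) := by
      have := pos (-m) (by omega); push_cast at this ⊢; linarith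
    exact fsym_congr (by rw [hm']; ring) (pos n hn) (fsym_neg_fst hA (base (-m).toNat n.toNat))
  · have hm' : ((((-m).toNat : ℕ)) : ℝ) = -(m : ℝ) := by
      have := pos (-m) (by omega); push_cast at this ⊢; linarith
    have hn' : ((((-n).toNat : ℕ)) : ℝ) = -(n : ℝ) := by
      have := pos (-n) (by omega); push_cast at this ⊢; linarith
    exact fsym_congr (by rw [hm']; ring) (by rw [hn']; ring)
      (fsym_neg_fst hA (fsym_neg hA (base (-m).toNat (-n).toNat)))

lemma fsym_rat (hA : Acrit V) (q r : ℚ) : FSym V (q : ℝ) (r : ℝ) := by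
  have base : FSym V ((q.num * r.den : ℤ) : ℝ) ((r.num * q.den : ℤ) : ℝ) :=
    fsym_int hA _ _
  have := fsym_scale (((q.den : ℝ) * (r.den : ℝ))⁻¹) base
  have hq : (q.den : ℝ) ≠ 0 := by exact_mod_cast q.den_ne_zero
  have hr : (r.den : ℝ) ≠ 0 := by exact_mod_cast r.den_ne_zero
  refine fsym_congr ?_ ?_ this
  · rw [Rat.cast_def]; push_cast; field_simp
  · rw [Rat.cast_def]; push_cast; field_simp

/-- Ficken's condition follows from Aronszajn's criterion. -/
lemma ficken (hA : Acrit V) (x y : V) (hxy : ‖x‖ = ‖y‖) (a b : ℝ) :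
    ‖a • x + b • y‖ = ‖b • x + a • y‖ := by
  have hc1 : Continuous fun p : ℝ × ℝ => ‖p.1 • x + p.2 • y‖ := by fun_prop
  have hc2 : Continuous fun p : ℝ × ℝ => ‖p.2 • x + p.1 • y‖ := by fun_prop
  have hd : Dense (Set.range fun p : ℚ × ℚ => ((p.1 : ℝ), (p.2 : ℝ))) := by
    have : DenseRange fun p : ℚ × ℚ => ((p.1 : ℝ), (p.2 : ℝ)) :=
      Rat.denseRange_cast.prodMap Rat.denseRange_cast
    exact this
  have heq := hc1.ext_on hd hc2 ?_
  · exact congrFun heq (a, b)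
  · rintro _ ⟨⟨q, r⟩, rfl⟩
    exact fsym_rat hA q r x y hxy
end PartA2

open MeasureTheory Set

namespace Aron

variable {V : Type*} [NormedAddCommGroup V] [NormedSpace ℝ V]

abbrev G2 := Fin 2 → ℝ

noncomputable def phi (u v : V) : G2 →ₗ[ℝ] V where
  toFun p := p 0 • u + p 1 • v
  map_add' p q := by simp only [Pi.add_apply]; module
  map_smul' c p := by simp only [Pi.smul_apply, smul_eq_mul, RingHom.id_apply]; module

noncomputable def nn (u v : V) (p : G2) : ℝ := ‖phi u v p‖

lemma nn_cont (u v : V) : Continuous (nn u v) :=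
  continuous_norm.comp (phi u v).continuous_of_finiteDimensional

lemma nn_nonneg (u v : V) (p : G2) : 0 ≤ nn u v p := norm_nonneg _

lemma nn_smul (u v : V) (c : ℝ) (p : G2) : nn u v (c • p) = |c| * nn u v p := by
  simp only [nn, _root_.map_smul, norm_smul, Real.norm_eq_abs]

section ind
variable {u v : V} (hind : ∀ a b : ℝ, a • u + b • v = 0 → a = 0 ∧ b = 0)
include hind

lemma nn_eq_zero {p : G2} (h : nn u v p = 0) : p = 0 := by
  have h0 : phi u v p = 0 := by
    simpa [nn] using h
  have := hind (p 0) (p 1) h0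
  funext i
  fin_cases i <;> simp [this.1, this.2]

lemma nn_pos {p : G2} (h : p ≠ 0) : 0 < nn u v p :=
  lt_of_le_of_ne (nn_nonneg u v p) (fun h' => h (nn_eq_zero hind h'.symm))

end ind

end Aron

namespace Aron

variable {V : Type*} [NormedAddCommGroup V] [NormedSpace ℝ V]

lemma nn_le (u v : V) (p : G2) : nn u v p ≤ (‖u‖ + ‖v‖) * ‖p‖ := by
  have h0 : |p 0| ≤ ‖p‖ := by
    simpa [Real.norm_eq_abs] using norm_le_pi_norm p 0
  have h1 : |p 1| ≤ ‖p‖ := by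
    simpa [Real.norm_eq_abs] using norm_le_pi_norm p 1
  have : nn u v p ≤ |p 0| * ‖u‖ + |p 1| * ‖v‖ := by
    refine (norm_add_le _ _).trans ?_
    simp only [norm_smul, Real.norm_eq_abs, le_refl]
  refine this.trans ?_
  have hu := norm_nonneg u
  have hv := norm_nonneg v
  nlinarith [abs_nonneg (p 0), abs_nonneg (p 1)]

section ind
variable {u v : V} (hind : ∀ a b : ℝ, a • u + b • v = 0 → a = 0 ∧ b = 0)
include hind

lemma exists_lower : ∃ c > 0, ∀ p : G2, c * ‖p‖ ≤ nn u v p := by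
  have hne : (Metric.sphere (0 : G2) 1).Nonempty :=
    NormedSpace.sphere_nonempty.mpr zero_le_one
  obtain ⟨p₀, hp₀, hmin⟩ :=
    (isCompact_sphere (0 : G2) 1).exists_isMinOn hne (nn_cont u v).continuousOn
  have hp₀ne : p₀ ≠ 0 := by
    intro h
    rw [h] at hp₀
    simp at hp₀
  refine ⟨nn u v p₀, nn_pos hind hp₀ne, fun p => ?_⟩
  by_cases hp : p = 0
  · simp [hp, nn, norm_zero]
  · have hpn : ‖p‖ ≠ 0 := norm_ne_zero_iff.mpr hp
    have hq : ‖p‖⁻¹ • p ∈ Metric.sphere (0 : G2) 1 := by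
      simp [norm_smul, abs_of_nonneg (inv_nonneg.mpr (norm_nonneg p)),
        inv_mul_cancel₀ hpn]
    have := hmin hq
    have h2 : nn u v p₀ ≤ nn u v (‖p‖⁻¹ • p) := this
    rw [nn_smul, abs_of_nonneg (inv_nonneg.mpr (norm_nonneg p))] at h2
    have hpos : (0:ℝ) < ‖p‖ := lt_of_le_of_ne (norm_nonneg p) (Ne.symm hpn)
    calc nn u v p₀ * ‖p‖ ≤ (‖p‖⁻¹ * nn u v p) * ‖p‖ := by nlinarith
    _ = nn u v p := by field_simp
end ind

/-- The unit ball of the planar norm. -/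
def KK (u v : V) : Set G2 := {p | nn u v p ≤ 1}

lemma isClosed_KK (u v : V) : IsClosed (KK u v) :=
  isClosed_le (nn_cont u v) continuous_const

section ind
variable {u v : V} (hind : ∀ a b : ℝ, a • u + b • v = 0 → a = 0 ∧ b = 0)
include hind

lemma isCompact_KK : IsCompact (KK u v) := by
  obtain ⟨c, hc, hlow⟩ := exists_lower hind
  refine Metric.isCompact_of_isClosed_isBounded (isClosed_KK u v) ?_
  rw [Metric.isBounded_iff_subset_closedBall 0]
  refine ⟨c⁻¹, fun p hp => ?_⟩
  have h1 : c * ‖p‖ ≤ 1 := (hlow p).trans hp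
  simp only [Metric.mem_closedBall, dist_zero_right]
  have h2 : ‖p‖ ≤ 1 / c := (le_div_iff₀ hc).mpr (by nlinarith)
  simpa [one_div] using h2

end ind

end Aron

namespace Aron

variable {V : Type*} [NormedAddCommGroup V] [NormedSpace ℝ V]

section ind
variable {u v : V} (hind : ∀ a b : ℝ, a • u + b • v = 0 → a = 0 ∧ b = 0)
include hind

lemma ball_subset_KK : Metric.ball (0 : G2) (‖u‖ + ‖v‖ + 1)⁻¹ ⊆ KK u v := by
  intro p hp
  simp only [Metric.mem_ball, dist_zero_right] at hp
  have hC : (0:ℝ) < ‖u‖ + ‖v‖ + 1 := by positivity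
  have h1 : nn u v p ≤ (‖u‖ + ‖v‖) * ‖p‖ := nn_le u v p
  have h2 : (‖u‖ + ‖v‖) * ‖p‖ ≤ (‖u‖ + ‖v‖ + 1) * ‖p‖ := by nlinarith [norm_nonneg p]
  have h3 : (‖u‖ + ‖v‖ + 1) * ‖p‖ < 1 := by
    calc (‖u‖ + ‖v‖ + 1) * ‖p‖ < (‖u‖ + ‖v‖ + 1) * (‖u‖ + ‖v‖ + 1)⁻¹ :=
        mul_lt_mul_of_pos_left hp hC
    _ = 1 := mul_inv_cancel₀ (ne_of_gt hC)
  exact le_of_lt (lt_of_le_of_lt (h1.trans h2) h3)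

lemma volKK_pos : 0 < volume (KK u v) :=
  lt_of_lt_of_le (Metric.measure_ball_pos volume 0 (by positivity)) (measure_mono (ball_subset_KK hind))

lemma volKK_lt_top : volume (KK u v) < ⊤ :=
  (isCompact_KK hind).measure_lt_top

end ind

/-- Determinant-type form on the plane. -/
def Df (w ξ : G2) : ℝ := w 0 * ξ 1 - w 1 * ξ 0

lemma g2_expand (w : G2) :
    w = w 0 • (Pi.basisFun ℝ (Fin 2)) 0 + w 1 • (Pi.basisFun ℝ (Fin 2)) 1 := by
  funext i
  fin_cases i <;> simp [Pi.basisFun_apply]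

lemma det_fin_two_linear (f : G2 →ₗ[ℝ] G2) :
    LinearMap.det f = f ((Pi.basisFun ℝ (Fin 2)) 0) 0 * f ((Pi.basisFun ℝ (Fin 2)) 1) 1 -
      f ((Pi.basisFun ℝ (Fin 2)) 1) 0 * f ((Pi.basisFun ℝ (Fin 2)) 0) 1 := by
  rw [← LinearMap.det_toMatrix (Pi.basisFun ℝ (Fin 2)) f, Matrix.det_fin_two]
  simp [LinearMap.toMatrix_apply]

lemma Df_comp (f : G2 →ₗ[ℝ] G2) (w ξ : G2) :
    Df (f w) (f ξ) = LinearMap.det f * Df w ξ := by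
  have he : ∀ i, (Pi.basisFun ℝ (Fin 2)) i = Pi.single i 1 := fun i => Pi.basisFun_apply ℝ _ i
  have hw : f w = w 0 • f ((Pi.basisFun ℝ (Fin 2)) 0) + w 1 • f ((Pi.basisFun ℝ (Fin 2)) 1) := by
    conv_lhs => rw [g2_expand w]
    simp [map_add, _root_.map_smul, he]
  have hξ : f ξ = ξ 0 • f ((Pi.basisFun ℝ (Fin 2)) 0) + ξ 1 • f ((Pi.basisFun ℝ (Fin 2)) 1) := by
    conv_lhs => rw [g2_expand ξ]
    simp [map_add, _root_.map_smul, he]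
  rw [det_fin_two_linear f]
  simp only [Df, hw, hξ, Pi.add_apply, Pi.smul_apply, smul_eq_mul]
  ring

lemma Df_add_left (w w' ξ : G2) : Df (w + w') ξ = Df w ξ + Df w' ξ := by
  simp only [Df, Pi.add_apply]; ring

end Aron

namespace Aron

variable {V : Type*} [NormedAddCommGroup V] [NormedSpace ℝ V]

noncomputable def swapMap (p q : G2) (d : ℝ) : G2 →ₗ[ℝ] G2 where
  toFun r := (d⁻¹ * (p 0 * r 1 - p 1 * r 0)) • p + (d⁻¹ * (r 0 * q 1 - r 1 * q 0)) • q
  map_add' r s := by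
    funext i
    simp only [Pi.add_apply, Pi.smul_apply, smul_eq_mul]
    ring
  map_smul' c r := by
    funext i
    simp only [Pi.smul_apply, Pi.add_apply, smul_eq_mul, RingHom.id_apply]
    ring

lemma swapMap_apply (p q : G2) (d : ℝ) (r : G2) :
    swapMap p q d r = (d⁻¹ * (p 0 * r 1 - p 1 * r 0)) • p
      + (d⁻¹ * (r 0 * q 1 - r 1 * q 0)) • q := rfl

lemma g2_ne_zero {p : G2} (hp : p ≠ 0) : p 0 ≠ 0 ∨ p 1 ≠ 0 := by
  by_contra h
  push_neg at h
  exact hp (funext fun i => by fin_cases i <;> simp [h.1, h.2])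

lemma df_ne_zero {p q : G2} (hp : p ≠ 0) (hdep : ¬∃ c : ℝ, q = c • p) :
    Df p q ≠ 0 := by
  intro hd0
  have hd0' : p 0 * q 1 - p 1 * q 0 = 0 := hd0
  rcases g2_ne_zero hp with h0 | h1
  · refine hdep ⟨q 0 / p 0, funext fun i => ?_⟩
    fin_cases i <;> simp only [Fin.zero_eta, Fin.mk_one, Pi.smul_apply, smul_eq_mul] <;> field_simp <;> linarith
      [mul_comm (q 0) (p 1)]
  · refine hdep ⟨q 1 / p 1, funext fun i => ?_⟩
    fin_cases i <;> simp only [Fin.zero_eta, Fin.mk_one, Pi.smul_apply, smul_eq_mul] <;> field_simp <;> linarith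
      [mul_comm (q 1) (p 0)]

lemma swapMap_invol {p q : G2} (hd : Df p q ≠ 0) (r : G2) :
    swapMap p q (Df p q) (swapMap p q (Df p q) r) = r := by
  have hd' : p 0 * q 1 - p 1 * q 0 ≠ 0 := hd
  funext i
  fin_cases i <;>
    (simp only [Fin.zero_eta, Fin.mk_one, swapMap_apply, Pi.add_apply, Pi.smul_apply, smul_eq_mul, Df]
     field_simp
     ring)

lemma swapMap_swaps {p q : G2} (hd : Df p q ≠ 0) : swapMap p q (Df p q) p = q := by
  have hd' : p 0 * q 1 - p 1 * q 0 ≠ 0 := hd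
  funext i
  fin_cases i <;>
    (simp only [swapMap_apply, Pi.add_apply, Pi.smul_apply, smul_eq_mul, Df]
     field_simp
     ring)

section ind
variable {u v : V} (hind : ∀ a b : ℝ, a • u + b • v = 0 → a = 0 ∧ b = 0)
  (hfick : ∀ x y : V, ‖x‖ = ‖y‖ → ∀ a b : ℝ, ‖a • x + b • y‖ = ‖b • x + a • y‖)
include hind hfick

lemma exists_isom (p q : G2) (hpq : nn u v p = nn u v q) :
    ∃ g : G2 ≃ₗ[ℝ] G2, (∀ r : G2, nn u v (g r) = nn u v r) ∧ g p = q := by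
  by_cases hp0 : p = 0
  · have hq0 : q = 0 := by
      refine nn_eq_zero hind ?_
      rw [← hpq, hp0]
      simp [nn]
    refine ⟨LinearEquiv.refl ℝ G2, fun r => rfl, ?_⟩
    simp [hp0, hq0]
  · have hnnp : 0 < nn u v p := nn_pos hind hp0
    by_cases hdep : ∃ c : ℝ, q = c • p
    · obtain ⟨c, rfl⟩ := hdep
      have habs : |c| = 1 := by
        rw [nn_smul] at hpq
        nlinarith [abs_nonneg c]
      rcases abs_eq (by norm_num : (0:ℝ) ≤ 1) |>.mp habs with hc | hc
      · subst hc
        exact ⟨LinearEquiv.refl ℝ G2, fun r => rfl, by simp⟩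
      · subst hc
        refine ⟨LinearEquiv.neg ℝ, fun r => ?_, by simp⟩
        simp only [LinearEquiv.neg_apply, nn, map_neg, norm_neg]
    · have hd : Df p q ≠ 0 := df_ne_zero hp0 hdep
      set g0 := swapMap p q (Df p q) with hg0
      have hinv : g0.comp g0 = LinearMap.id := LinearMap.ext (swapMap_invol hd)
      refine ⟨LinearEquiv.ofLinear g0 g0 hinv hinv, fun r => ?_, ?_⟩
      · have hxy : ‖phi u v p‖ = ‖phi u v q‖ := hpq
        have hrepr : ∀ a b : ℝ, phi u v (a • p + b • q) = a • phi u v p + b • phi u v q := by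
          intro a b
          simp [map_add, _root_.map_smul]
        show nn u v (g0 r) = nn u v r
        rw [hg0, swapMap_apply]
        set a := (Df p q)⁻¹ * (r 0 * q 1 - r 1 * q 0) with ha
        set b := (Df p q)⁻¹ * (p 0 * r 1 - p 1 * r 0) with hb
        have hrrepr : a • p + b • q = r := by
          have hd' : p 0 * q 1 - p 1 * q 0 ≠ 0 := hd
          funext i
          fin_cases i <;>
            (simp only [Fin.zero_eta, Fin.mk_one, ha, hb, Pi.add_apply, Pi.smul_apply, smul_eq_mul, Df]
             field_simp
             ring)
        calc ‖phi u v (b • p + a • q)‖ = ‖b • phi u v p + a • phi u v q‖ := by rw [hrepr]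
        _ = ‖a • phi u v p + b • phi u v q‖ := hfick _ _ hxy b a
        _ = ‖phi u v (a • p + b • q)‖ := by rw [hrepr]
        _ = nn u v r := by rw [hrrepr]; rfl
      · show g0 p = q
        exact swapMap_swaps hd

end ind

end Aron

namespace Aron

variable {V : Type*} [NormedAddCommGroup V] [NormedSpace ℝ V]

section ind
variable {u v : V} (hind : ∀ a b : ℝ, a • u + b • v = 0 → a = 0 ∧ b = 0)
include hind

lemma abs_det_symm_eq_one (g : G2 ≃ₗ[ℝ] G2) (hg : ∀ r : G2, nn u v (g r) = nn u v r) :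
    |LinearMap.det (g.symm : G2 →ₗ[ℝ] G2)| = 1 := by
  have hKpre : ⇑g ⁻¹' KK u v = KK u v := by
    ext r
    simp only [Set.mem_preimage, KK, Set.mem_setOf_eq, hg r]
  have hmeas := MeasureTheory.Measure.addHaar_preimage_linearEquiv volume g (KK u v)
  rw [hKpre] at hmeas
  have h1 : ENNReal.ofReal |LinearMap.det (g.symm : G2 →ₗ[ℝ] G2)| = 1 := by
    have := (ENNReal.mul_eq_right (ne_of_gt (volKK_pos hind))
      (ne_of_lt (volKK_lt_top hind))).mp hmeas.symm
    exact this
  have h2 := ENNReal.ofReal_eq_one.mp h1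
  exact h2

lemma abs_det_eq_one (g : G2 ≃ₗ[ℝ] G2) (hg : ∀ r : G2, nn u v (g r) = nn u v r) :
    |LinearMap.det (g : G2 →ₗ[ℝ] G2)| = 1 := by
  have h1 := abs_det_symm_eq_one hind g.symm (fun r => by
    have := hg (g.symm r)
    rw [LinearEquiv.apply_symm_apply] at this
    exact this.symm)
  simpa using h1

end ind

end Aron

namespace Aron

variable {V : Type*} [NormedAddCommGroup V] [NormedSpace ℝ V]

/-- Second-moment quadratic form over the unit ball `KK u v`. -/
noncomputable def Qf (u v : V) (w : G2) : ℝ := ∫ ξ in KK u v, (Df w ξ) ^ 2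

lemma cont_Df (w : G2) : Continuous fun ξ : G2 => Df w ξ := by
  simp only [Df]
  fun_prop

section ind
variable {u v : V} (hind : ∀ a b : ℝ, a • u + b • v = 0 → a = 0 ∧ b = 0)
include hind

lemma integrableOn_KK {f : G2 → ℝ} (hf : Continuous f) : IntegrableOn f (KK u v) volume :=
  hf.continuousOn.integrableOn_compact (isCompact_KK hind)

lemma Qf_closed (w : G2) :
    Qf u v w = w 0 ^ 2 * (∫ ξ in KK u v, (ξ 1) ^ 2)
      - 2 * w 0 * w 1 * (∫ ξ in KK u v, ξ 0 * ξ 1)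
      + w 1 ^ 2 * (∫ ξ in KK u v, (ξ 0) ^ 2) := by
  have hc1 : Continuous fun ξ : G2 => (ξ 1) ^ 2 := by fun_prop
  have hc2 : Continuous fun ξ : G2 => ξ 0 * ξ 1 := by fun_prop
  have hc3 : Continuous fun ξ : G2 => (ξ 0) ^ 2 := by fun_prop
  have h1 : IntegrableOn (fun ξ : G2 => w 0 ^ 2 * (ξ 1) ^ 2) (KK u v) volume :=
    integrableOn_KK hind (by fun_prop)
  have h2 : IntegrableOn (fun ξ : G2 => (-(2 * w 0 * w 1)) * (ξ 0 * ξ 1)) (KK u v) volume :=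
    integrableOn_KK hind (by fun_prop)
  have h3 : IntegrableOn (fun ξ : G2 => w 1 ^ 2 * (ξ 0) ^ 2) (KK u v) volume :=
    integrableOn_KK hind (by fun_prop)
  have key : ∀ ξ : G2, (Df w ξ) ^ 2 =
      w 0 ^ 2 * (ξ 1) ^ 2 + (-(2 * w 0 * w 1)) * (ξ 0 * ξ 1) + w 1 ^ 2 * (ξ 0) ^ 2 := by
    intro ξ
    simp only [Df]
    ring
  have h12 : IntegrableOn
      (fun ξ : G2 => w 0 ^ 2 * (ξ 1) ^ 2 + (-(2 * w 0 * w 1)) * (ξ 0 * ξ 1)) (KK u v) volume :=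
    h1.add h2
  rw [Qf]
  simp only [key]
  rw [integral_add h12 h3, integral_add h1 h2, integral_const_mul, integral_const_mul,
    integral_const_mul]
  ring

lemma Qf_zero : Qf u v 0 = 0 := by
  rw [Qf_closed hind]
  simp

lemma Qf_smul (c : ℝ) (w : G2) : Qf u v (c • w) = c ^ 2 * Qf u v w := by
  rw [Qf_closed hind, Qf_closed hind]
  simp only [Pi.smul_apply, smul_eq_mul]
  ring

lemma Qf_parallelogram (p q : G2) :
    Qf u v (p + q) + Qf u v (p - q) = 2 * Qf u v p + 2 * Qf u v q := by
  rw [Qf_closed hind, Qf_closed hind, Qf_closed hind, Qf_closed hind]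
  simp only [Pi.add_apply, Pi.sub_apply]
  ring

lemma Qf_isom (g : G2 ≃ₗ[ℝ] G2) (hg : ∀ r : G2, nn u v (g r) = nn u v r) (w : G2) :
    Qf u v (g w) = Qf u v w := by
  have hdet : |LinearMap.det (g : G2 →ₗ[ℝ] G2)| = 1 := abs_det_eq_one hind g hg
  have hdet0 : LinearMap.det (g : G2 →ₗ[ℝ] G2) ≠ 0 := by
    intro h
    rw [h] at hdet
    norm_num at hdet
  have hmap : Measure.map (⇑g) volume = volume := by
    have h := Measure.map_linearMap_addHaar_eq_smul_addHaar (volume : Measure G2) hdet0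
    rw [abs_inv, hdet] at h
    simpa using h
  have hKmeas : MeasurableSet (KK u v) := (isClosed_KK u v).measurableSet
  let e : G2 ≃ᵐ G2 := g.toContinuousLinearEquiv.toHomeomorph.toMeasurableEquiv
  have hecoe : ⇑e = ⇑g := rfl
  have hmap' : Measure.map (⇑e) volume = volume := by rw [hecoe]; exact hmap
  have pointwise : ∀ r : G2,
      Set.indicator (KK u v) (fun ξ => (Df (g w) ξ) ^ 2) (g r)
        = Set.indicator (KK u v) (fun ξ => (Df w ξ) ^ 2) r := by
    intro r
    by_cases hr : r ∈ KK u v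
    · have hgr : g r ∈ KK u v := by
        simp only [KK, Set.mem_setOf_eq] at hr ⊢
        rw [hg r]
        exact hr
      rw [Set.indicator_of_mem hgr, Set.indicator_of_mem hr]
      have := Df_comp (g : G2 →ₗ[ℝ] G2) w r
      have hcoe : (g : G2 →ₗ[ℝ] G2) w = g w := rfl
      have hcoe2 : (g : G2 →ₗ[ℝ] G2) r = g r := rfl
      rw [hcoe, hcoe2] at this
      rw [this, mul_pow, ← sq_abs (LinearMap.det (g : G2 →ₗ[ℝ] G2)), hdet]
      ring
    · have hgr : g r ∉ KK u v := by
        simp only [KK, Set.mem_setOf_eq] at hr ⊢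
        rw [hg r]
        exact hr
      rw [Set.indicator_of_notMem hgr, Set.indicator_of_notMem hr]
  calc Qf u v (g w) = ∫ ξ, Set.indicator (KK u v) (fun ξ => (Df (g w) ξ) ^ 2) ξ := by
        rw [Qf, ← integral_indicator hKmeas]
  _ = ∫ ξ, Set.indicator (KK u v) (fun ξ => (Df (g w) ξ) ^ 2) ξ ∂(Measure.map (⇑e) volume) := by
        rw [hmap']
  _ = ∫ r, Set.indicator (KK u v) (fun ξ => (Df (g w) ξ) ^ 2) (e r) := by
        rw [integral_map_equiv]
  _ = ∫ r, Set.indicator (KK u v) (fun ξ => (Df w ξ) ^ 2) r := by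
        congr 1
        funext r
        rw [hecoe]
        exact pointwise r
  _ = Qf u v w := by
        rw [Qf, ← integral_indicator hKmeas]

end ind

end Aron

namespace Aron

variable {V : Type*} [NormedAddCommGroup V] [NormedSpace ℝ V]

section ind
variable {u v : V} (hind : ∀ a b : ℝ, a • u + b • v = 0 → a = 0 ∧ b = 0)
include hind

lemma Qf_pos {w : G2} (hw : w ≠ 0) : 0 < Qf u v w := by
  rw [Qf]
  have hKmeas : MeasurableSet (KK u v) := (isClosed_KK u v).measurableSet
  refine (setIntegral_pos_iff_support_of_nonneg_ae ?_ ?_).mpr ?_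
  · exact Filter.Eventually.of_forall fun ξ => sq_nonneg _
  · exact integrableOn_KK hind (by exact (cont_Df w).pow 2)
  · -- construct the kernel line
    set ℓ : G2 →ₗ[ℝ] ℝ :=
      { toFun := fun ξ => Df w ξ
        map_add' := fun a b => by simp only [Df, Pi.add_apply]; ring
        map_smul' := fun c a => by
          simp only [Df, Pi.smul_apply, smul_eq_mul, RingHom.id_apply]; ring } with hℓ
    have hwcoord : w 0 ≠ 0 ∨ w 1 ≠ 0 := g2_ne_zero hw
    have hζ : ℓ ![-(w 1), w 0] ≠ 0 := by
      show Df w ![-(w 1), w 0] ≠ 0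
      simp only [Df, Matrix.cons_val_zero, Matrix.cons_val_one, Matrix.head_cons]
      have : w 0 * w 0 - w 1 * -w 1 = w 0 ^ 2 + w 1 ^ 2 := by ring
      rw [this]
      rcases hwcoord with h | h <;> positivity
    have hker_ne : LinearMap.ker ℓ ≠ ⊤ := by
      intro h
      exact hζ (by
        have : (![-(w 1), w 0] : G2) ∈ LinearMap.ker ℓ := by rw [h]; trivial
        exact this)
    have hker0 : volume ((LinearMap.ker ℓ : Submodule ℝ G2) : Set G2) = 0 :=
      MeasureTheory.Measure.addHaar_submodule volume _ hker_ne
    set r0 : ℝ := (‖u‖ + ‖v‖ + 1)⁻¹ with hr0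
    have hball : Metric.ball (0 : G2) r0 ⊆ KK u v := ball_subset_KK hind
    have hsub : Metric.ball (0 : G2) r0 \ (LinearMap.ker ℓ : Submodule ℝ G2) ⊆
        (Function.support fun ξ => (Df w ξ) ^ 2) ∩ KK u v := by
      rintro ξ ⟨hξb, hξk⟩
      refine ⟨?_, hball hξb⟩
      simp only [Function.mem_support]
      intro h0
      apply hξk
      have : Df w ξ = 0 := by
        have := sq_eq_zero_iff.mp h0
        exact this
      exact this
    calc (0 : ENNReal) < volume (Metric.ball (0 : G2) r0 \ (LinearMap.ker ℓ : Submodule ℝ G2)) := by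
          rw [measure_diff_null hker0]
          exact Metric.measure_ball_pos volume 0 (by positivity)
    _ ≤ volume ((Function.support fun ξ => (Df w ξ) ^ 2) ∩ KK u v) := measure_mono hsub

end ind

end Aron

namespace Aron

variable {V : Type*} [NormedAddCommGroup V] [NormedSpace ℝ V]

lemma phi_apply (u v : V) (p : G2) : phi u v p = p 0 • u + p 1 • v := rfl

lemma nn_zero (u v : V) : nn u v 0 = 0 := by simp [nn]

section ind
variable {u v : V} (hind : ∀ a b : ℝ, a • u + b • v = 0 → a = 0 ∧ b = 0)
  (hfick : ∀ x y : V, ‖x‖ = ‖y‖ → ∀ a b : ℝ, ‖a • x + b • y‖ = ‖b • x + a • y‖)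
include hind hfick

lemma nn_parallelogram (p q : G2) :
    nn u v (p + q) ^ 2 + nn u v (p - q) ^ 2 = 2 * nn u v p ^ 2 + 2 * nn u v q ^ 2 := by
  have hu0 : u ≠ 0 := fun h => by simpa using (hind 1 0 (by simp [h])).1
  have hnu : 0 < ‖u‖ := norm_pos_iff.mpr hu0
  set e0 : G2 := ![1, 0] with he0
  have hphi_e0 : phi u v e0 = u := by
    rw [phi_apply]
    simp [he0]
  have hne0 : nn u v e0 = ‖u‖ := by rw [nn, hphi_e0]
  set w₀ : G2 := ‖u‖⁻¹ • e0 with hw₀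
  have hnw₀ : nn u v w₀ = 1 := by
    rw [hw₀, nn_smul, hne0, abs_of_nonneg (inv_nonneg.mpr (norm_nonneg u)),
      inv_mul_cancel₀ (ne_of_gt hnu)]
  set q₀ : ℝ := Qf u v w₀ with hq₀
  have hw₀ne : w₀ ≠ 0 := by
    intro h
    rw [h, nn_zero] at hnw₀
    norm_num at hnw₀
  have hq₀pos : 0 < q₀ := Qf_pos hind hw₀ne
  have key : ∀ w : G2, Qf u v w = nn u v w ^ 2 * q₀ := by
    intro w
    by_cases hw : w = 0
    · rw [hw, Qf_zero hind, nn_zero]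
      ring
    · have hnw : 0 < nn u v w := nn_pos hind hw
      set w' : G2 := (nn u v w)⁻¹ • w with hw'
      have hnw' : nn u v w' = 1 := by
        rw [hw', nn_smul, abs_of_nonneg (inv_nonneg.mpr (le_of_lt hnw)),
          inv_mul_cancel₀ (ne_of_gt hnw)]
      obtain ⟨g, hg, hgw⟩ := exists_isom hind hfick w₀ w' (by rw [hnw', hnw₀])
      have h1 : Qf u v w' = q₀ := by rw [← hgw, Qf_isom hind g hg]
      have h2 : w = nn u v w • w' := by
        rw [hw', smul_smul, mul_inv_cancel₀ (ne_of_gt hnw), one_smul]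
      calc Qf u v w = Qf u v (nn u v w • w') := by rw [← h2]
      _ = nn u v w ^ 2 * Qf u v w' := Qf_smul hind _ _
      _ = nn u v w ^ 2 * q₀ := by rw [h1]
  have hpar := Qf_parallelogram hind p q
  rw [key (p + q), key (p - q), key p, key q] at hpar
  have h3 : (nn u v (p + q) ^ 2 + nn u v (p - q) ^ 2
      - (2 * nn u v p ^ 2 + 2 * nn u v q ^ 2)) * q₀ = 0 := by linear_combination hpar
  rcases mul_eq_zero.mp h3 with h | h
  · linarith
  · exact absurd h (ne_of_gt hq₀pos)

lemma parallelogram_indep :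
    ‖u + v‖ ^ 2 + ‖u - v‖ ^ 2 = 2 * ‖u‖ ^ 2 + 2 * ‖v‖ ^ 2 := by
  have h := nn_parallelogram hind hfick ![1, 0] ![0, 1]
  have e1 : nn u v (![1, 0] + ![0, 1]) = ‖u + v‖ := by
    rw [nn, phi_apply]
    norm_num
  have e2 : nn u v (![1, 0] - ![0, 1]) = ‖u - v‖ := by
    rw [nn, phi_apply]
    norm_num
    rw [sub_eq_add_neg]
  have e3 : nn u v ![1, 0] = ‖u‖ := by
    rw [nn, phi_apply]
    norm_num
  have e4 : nn u v ![0, 1] = ‖v‖ := by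
    rw [nn, phi_apply]
    norm_num
  rw [e1, e2, e3, e4] at h
  exact h

end ind

end Aron

section Final
variable {V : Type*} [NormedAddCommGroup V] [NormedSpace ℝ V]

theorem parallelogram_of_acrit (hA : Acrit V) (u v : V) :
    ‖u + v‖ ^ 2 + ‖u - v‖ ^ 2 = 2 * ‖u‖ ^ 2 + 2 * ‖v‖ ^ 2 := by
  by_cases hu : u = 0
  · simp only [hu, zero_add, zero_sub, norm_neg, norm_zero]
    ring
  · by_cases hdep : ∃ c : ℝ, v = c • u
    · obtain ⟨c, rfl⟩ := hdep
      have h1 : u + c • u = (1 + c) • u := by module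
      have h2 : u - c • u = (1 - c) • u := by module
      rw [h1, h2, norm_smul, norm_smul, norm_smul]
      simp only [Real.norm_eq_abs]
      rw [mul_pow, mul_pow, mul_pow, sq_abs, sq_abs, sq_abs]
      ring
    · have hind : ∀ a b : ℝ, a • u + b • v = 0 → a = 0 ∧ b = 0 := by
        intro a b hab
        by_cases hb : b = 0
        · subst hb
          rw [zero_smul, add_zero] at hab
          rcases smul_eq_zero.mp hab with h | h
          · exact ⟨h, rfl⟩
          · exact absurd h hu
        · exfalso
          apply hdep
          refine ⟨b⁻¹ * (-a), ?_⟩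
          have hbv : b • v = (-a) • u := by
            have h2 := eq_neg_of_add_eq_zero_right hab
            rw [h2, ← neg_smul]
          calc v = b⁻¹ • (b • v) := by rw [smul_smul, inv_mul_cancel₀ hb, one_smul]
          _ = b⁻¹ • ((-a) • u) := by rw [hbv]
          _ = (b⁻¹ * (-a)) • u := by rw [smul_smul]
      exact Aron.parallelogram_indep hind (fun x y hxy a b => ficken hA x y hxy a b)

end Final

theorem stmt_14 (V : Type*) [NormedAddCommGroup V] [NormedSpace ℝ V] :
    List.TFAE
      [ ∀ v₁ w₁ v₂ w₂ : V, ‖v₁‖ = ‖v₂‖ → ‖w₁‖ = ‖w₂‖ → ‖v₁ - w₁‖ = ‖v₂ - w₂‖ →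
          ‖v₁ + w₁‖ = ‖v₂ + w₂‖,
        Nonempty (InnerProductSpace ℝ V),
        ∀ v w : V, ‖v + w‖ ^ 2 + ‖v - w‖ ^ 2 = 2 * ‖v‖ ^ 2 + 2 * ‖w‖ ^ 2 ] := by
  tfae_have 1 → 3 := by
    intro h v w
    exact parallelogram_of_acrit h v w
  tfae_have 3 → 2 := by
    intro h
    exact ⟨InnerProductSpace.ofNorm ℝ (fun x y => by linear_combination h x y)⟩
  tfae_have 2 → 3 := by
    rintro ⟨ip⟩ v w
    letI := ip
    linear_combination parallelogram_law_with_norm ℝ v w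
  tfae_have 3 → 1 := by
    intro h v₁ w₁ v₂ w₂ h1 h2 h3
    have e1 := h v₁ w₁
    have e2 := h v₂ w₂
    rw [h1, h2, h3] at e1
    have hsq : ‖v₁ + w₁‖ ^ 2 = ‖v₂ + w₂‖ ^ 2 := by linarith
    have ha := norm_nonneg (v₁ + w₁)
    have hb := norm_nonneg (v₂ + w₂)
    nlinarith [sq_nonneg (‖v₁ + w₁‖ - ‖v₂ + w₂‖), sq_nonneg (‖v₁ + w₁‖ + ‖v₂ + w₂‖)]
  tfae_finish
end

section
/- Let V be a 2-dimensional real normed space such that whenever p and q are nonzero with ‖p + q‖ = ‖p - q‖ there is a linear isometry of V fixing p and negating q. Fix unit vectors e₁, e₂ with ‖e₁ + e₂‖ = ‖e₁ - e₂‖, and identify V with ℝ² via this basis. Then the map ρ sending (x, y) to (-y, x) (rotation through a right angle in these coordinates) is an isometry of V. -/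
theorem stmt_15 (V : Type*) [NormedAddCommGroup V] [NormedSpace ℝ V]
    [FiniteDimensional ℝ V] (hdim : Module.finrank ℝ V = 2)
    (hrefl : ∀ p q : V, p ≠ 0 → q ≠ 0 → ‖p + q‖ = ‖p - q‖ →
      ∃ μ : V →ₗᵢ[ℝ] V, μ p = p ∧ μ q = -q)
    (e₁ e₂ : V) (he₁ : ‖e₁‖ = 1) (he₂ : ‖e₂‖ = 1)
    (hind : LinearIndependent ℝ ![e₁, e₂])
    (hdiag : ‖e₁ + e₂‖ = ‖e₁ - e₂‖) :
    ∀ x y : ℝ, ‖x • e₁ + y • e₂‖ = ‖(-y) • e₁ + x • e₂‖ := by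
  have h1 : e₁ ≠ 0 := by
    intro h; rw [h, norm_zero] at he₁; norm_num at he₁
  have h2 : e₂ ≠ 0 := by
    intro h; rw [h, norm_zero] at he₂; norm_num at he₂
  have hpair := LinearIndependent.pair_iff.mp hind
  have hs : e₁ + e₂ ≠ 0 := by
    intro h
    have := hpair 1 1 (by simpa using h)
    norm_num at this
  have hd : e₁ - e₂ ≠ 0 := by
    intro h
    have := hpair 1 (-1) (by rw [one_smul, neg_one_smul, ← sub_eq_add_neg]; exact h)
    norm_num at this
  obtain ⟨μ, hμ1, hμ2⟩ := hrefl e₁ e₂ h1 h2 hdiag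
  have hnorm2 : ‖(e₁ + e₂) + (e₁ - e₂)‖ = ‖(e₁ + e₂) - (e₁ - e₂)‖ := by
    have : (e₁ + e₂) + (e₁ - e₂) = (2:ℝ) • e₁ := by module
    rw [this]
    have : (e₁ + e₂) - (e₁ - e₂) = (2:ℝ) • e₂ := by module
    rw [this, norm_smul, norm_smul, he₁, he₂]
  obtain ⟨ν, hν1, hν2⟩ := hrefl (e₁ + e₂) (e₁ - e₂) hs hd hnorm2
  have hνe₁ : ν e₁ = e₂ := by
    have h : ν ((e₁ + e₂) + (e₁ - e₂)) = (e₁ + e₂) + -(e₁ - e₂) := by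
      rw [map_add, hν1, hν2]
    have h2' : (e₁ + e₂) + (e₁ - e₂) = (2:ℝ) • e₁ := by module
    have h3' : (e₁ + e₂) + -(e₁ - e₂) = (2:ℝ) • e₂ := by module
    rw [h2', h3', map_smul] at h
    have := smul_right_injective V (by norm_num : (2:ℝ) ≠ 0) h
    exact this
  have hνe₂ : ν e₂ = e₁ := by
    have h : ν ((e₁ + e₂) - (e₁ - e₂)) = (e₁ + e₂) - -(e₁ - e₂) := by
      rw [map_sub, hν1, hν2]
    have h2' : (e₁ + e₂) - (e₁ - e₂) = (2:ℝ) • e₂ := by module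
    have h3' : (e₁ + e₂) - -(e₁ - e₂) = (2:ℝ) • e₁ := by module
    rw [h2', h3', map_smul] at h
    exact smul_right_injective V (by norm_num : (2:ℝ) ≠ 0) h
  intro x y
  have key : ν (μ (x • e₁ + y • e₂)) = (-y) • e₁ + x • e₂ := by
    rw [map_add, map_smul, map_smul, hμ1, hμ2, map_add, map_smul, map_smul, hνe₁,
      map_neg, hνe₂]
    module
  calc ‖x • e₁ + y • e₂‖ = ‖ν (μ (x • e₁ + y • e₂))‖ := by
        rw [ν.norm_map, μ.norm_map]
    _ = ‖(-y) • e₁ + x • e₂‖ := by rw [key]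
end

section
/- Let V be a 3-dimensional real normed space in which every 2-dimensional subspace is euclidean. Let U be a 2-dimensional subspace and let e₃ be a unit vector such that the affine plane e₃ + U supports the unit ball of V. Then for every unit vector p in U, e₃ is orthogonal to p in the (euclidean) 2-dimensional subspace spanned by p and e₃, and in particular ‖s • p + c • e₃‖ = 1 whenever s² + c² = 1. -/
theorem stmt_17 (V : Type*) [NormedAddCommGroup V] [NormedSpace ℝ V]
    [FiniteDimensional ℝ V] (hdim : Module.finrank ℝ V = 3)
    (h2 : ∀ W : Submodule ℝ V, Module.finrank ℝ W = 2 → Nonempty (InnerProductSpace ℝ W))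
    (U : Submodule ℝ V) (hU : Module.finrank ℝ U = 2)
    (e₃ : V) (he₃ : ‖e₃‖ = 1)
    (hsupp : ∀ u ∈ U, 1 ≤ ‖e₃ + u‖) :
    ∀ p ∈ U, ‖p‖ = 1 →
      (∀ t : ℝ, ‖e₃‖ ≤ ‖e₃ + t • p‖) ∧
      (∀ s c : ℝ, s ^ 2 + c ^ 2 = 1 → ‖s • p + c • e₃‖ = 1) := by
  intro p hpU hp1
  have hfirst : ∀ t : ℝ, ‖e₃‖ ≤ ‖e₃ + t • p‖ := by
    intro t
    rw [he₃]
    exact hsupp (t • p) (U.smul_mem t hpU)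
  refine ⟨hfirst, ?_⟩
  -- e₃ ∉ U
  have he₃U : e₃ ∉ U := by
    intro h
    have := hsupp (-e₃) (U.neg_mem h)
    simp at this
    linarith
  have hpne : p ≠ 0 := by
    intro h; rw [h] at hp1; simp at hp1
  -- linear independence of ![p, e₃]
  have hli : LinearIndependent ℝ ![p, e₃] := by
    rw [LinearIndependent.pair_iff]
    intro s t hst
    by_cases ht : t = 0
    · subst ht
      simp only [zero_smul, add_zero, smul_eq_zero] at hst
      rcases hst with h | h
      · exact ⟨h, rfl⟩
      · exact absurd h hpne
    · exfalso
      apply he₃U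
      have h' : t • e₃ = -(s • p) := by
        rw [eq_neg_iff_add_eq_zero, add_comm]; exact hst
      have h'' : e₃ = -((t⁻¹ * s) • p) := by
        have := congrArg (fun v : V => t⁻¹ • v) h'
        simpa [smul_smul, inv_mul_cancel₀ ht] using this
      rw [h'']
      exact U.neg_mem (U.smul_mem _ hpU)
  set W : Submodule ℝ V := Submodule.span ℝ (Set.range ![p, e₃]) with hWdef
  have hW2 : Module.finrank ℝ W = 2 := by
    rw [hWdef, finrank_span_eq_card hli]
    simp
  have hpar : ∀ x y : (↥W),
      ‖x + y‖ * ‖x + y‖ + ‖x - y‖ * ‖x - y‖ = 2 * (‖x‖ * ‖x‖ + ‖y‖ * ‖y‖) :=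
    (h2 W hW2).elim fun inst => by
      letI := inst; exact fun x y => by simpa only [sq] using parallelogram_law_with_norm ℝ x y
  letI instC : InnerProductSpace ℝ W := InnerProductSpace.ofNorm ℝ hpar
  have hpW : p ∈ W := Submodule.subset_span ⟨0, rfl⟩
  have heW : e₃ ∈ W := Submodule.subset_span ⟨1, rfl⟩
  set p' : W := ⟨p, hpW⟩
  set e' : W := ⟨e₃, heW⟩
  have hnp' : ‖p'‖ = 1 := hp1
  have hne' : ‖e'‖ = 1 := he₃
  set a : ℝ := inner ℝ e' p' with ha
  have hcomm : (inner ℝ p' e' : ℝ) = a := by rw [ha]; exact real_inner_comm e' p'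
  have hkey : ∀ t : ℝ, ‖e' + t • p'‖ ^ 2 = 1 + 2 * t * a + t ^ 2 := by
    intro t
    rw [← real_inner_self_eq_norm_sq, inner_add_add_self]
    simp only [real_inner_smul_left, real_inner_smul_right,
      real_inner_self_eq_norm_sq, hnp', hne', hcomm, ← ha, norm_smul,
      Real.norm_eq_abs, mul_pow, sq_abs]
    ring
  have hge : ∀ t : ℝ, 1 ≤ ‖e' + t • p'‖ := by
    intro t
    have : (e' + t • p' : W) = (⟨e₃ + t • p, W.add_mem heW (W.smul_mem t hpW)⟩ : W) := rfl
    rw [this]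
    exact hsupp (t • p) (U.smul_mem t hpU)
  have haz : a = 0 := by
    have h1 := hge (-a)
    have h2 := hkey (-a)
    have h3 : (1:ℝ) ≤ ‖e' + (-a) • p'‖ ^ 2 := by nlinarith [norm_nonneg (e' + (-a) • p')]
    nlinarith
  intro s c hsc
  have hs : ‖s • p + c • e₃‖ = ‖(s • p' + c • e' : W)‖ := rfl
  rw [hs]
  have hsq : ‖(s • p' + c • e' : W)‖ ^ 2 = 1 := by
    rw [← real_inner_self_eq_norm_sq, inner_add_add_self]
    simp only [real_inner_smul_left, real_inner_smul_right,
      real_inner_self_eq_norm_sq, hnp', hne', hcomm, ← ha, haz, norm_smul,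
      Real.norm_eq_abs, mul_pow, sq_abs]
    linarith
  nlinarith [norm_nonneg (s • p' + c • e' : W), hsq]
end
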